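/- arXiv:1510.04998 — 6 statements merged into one kernel-verified Lean document; each statement's English description precedes it below -/
import Mathlib

section
/- Every function f that is continuous on cl D and holomorphic on D extends holomorphically to G; that is, there exists F holomorphic on G with F(z, w) = f(z, w) for all (z, w) ∈ D. -/
open Set Complex

noncomputable section

/-- The bounded Hartogs domain `D ⊂ ℂ²` from the paper. -/
def domD : Set (ℂ × ℂ) :=
  {p | ∃ r φ : ℝ, 1 / 2 < r ∧ r < 1 ∧ 0 < φ ∧ φ < 2 * Real.pi ∧
    p.1 = (r : ℂ) * Complex.exp (φ * Complex.I) ∧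
    (φ ≤ Real.pi / 2 → ‖p.2‖ < 1) ∧
    (Real.pi / 2 < φ → φ < 3 * Real.pi / 2 → ‖p.2‖ < 3) ∧
    (3 * Real.pi / 2 ≤ φ → 2 < ‖p.2‖ ∧ ‖p.2‖ < 3)}

/-- `K` is norming for the family `F` of functions on `closure S`. -/
def IsNorming {E : Type*} [TopologicalSpace E] (S K : Set E) (F : Set (E → ℂ)) : Prop :=
  ∀ f ∈ F, sSup ((fun p => ‖f p‖) '' K) =
    sSup ((fun p => ‖f p‖) '' closure S)

/-- `O(cl S)`: functions extending holomorphically to an open neighborhood of `closure S`. -/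
def Ocl {E : Type*} [NormedAddCommGroup E] [NormedSpace ℂ E] (S : Set E) :
    Set (E → ℂ) :=
  {f | ∃ U : Set E, IsOpen U ∧ closure S ⊆ U ∧ DifferentiableOn ℂ f U}

/-- `A(S)`: functions continuous on `closure S` and holomorphic on `S`. -/
def Acl {E : Type*} [NormedAddCommGroup E] [NormedSpace ℂ E] (S : Set E) :
    Set (E → ℂ) :=
  {f | ContinuousOn f (closure S) ∧ DifferentiableOn ℂ f S}

/-- `K` is the minimal compact norming set for the family `F` on `closure S`
(i.e. the Shilov-type boundary associated with `F`). -/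
def IsShilovFor {E : Type*} [NormedAddCommGroup E] [NormedSpace ℂ E]
    (S : Set E) (F : Set (E → ℂ)) (K : Set E) : Prop :=
  IsCompact K ∧ K ⊆ closure S ∧ IsNorming S K F ∧
    ∀ K' : Set E, IsCompact K' → K' ⊆ closure S → IsNorming S K' F → K ⊆ K'

/-- The Hartogs domain `G ⊃ D`. -/
def domG : Set (ℂ × ℂ) :=
  {p | ∃ r φ : ℝ, 1 / 2 < r ∧ r < 1 ∧ 0 < φ ∧ φ < 2 * Real.pi ∧
    p.1 = (r : ℂ) * Complex.exp (φ * Complex.I) ∧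
    (φ ≤ Real.pi / 2 → ‖p.2‖ < 1) ∧
    (Real.pi / 2 < φ → ‖p.2‖ < 3)}


namespace Stmt6Aux

def phi (z : ℂ) : ℝ := if 0 < z.arg then z.arg else z.arg + 2 * Real.pi

lemma phi_pos (z : ℂ) : 0 < phi z := by
  unfold phi; split
  · assumption
  · nlinarith [Complex.neg_pi_lt_arg z, Real.pi_pos]

lemma phi_le (z : ℂ) : phi z ≤ 2 * Real.pi := by
  unfold phi; split
  · nlinarith [Complex.arg_le_pi z, Real.pi_pos]
  · linarith [not_lt.mp ‹¬ 0 < z.arg›]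

lemma phi_spec {z : ℂ} (hz : z ≠ 0) :
    z = (‖z‖ : ℂ) * Complex.exp (phi z * Complex.I) := by
  unfold phi; split
  · rw [Complex.norm_mul_exp_arg_mul_I]
  · rw [show ((z.arg + 2*Real.pi : ℝ) : ℂ) * I = z.arg * I + 2*Real.pi*I by push_cast; ring,
      Complex.exp_add, Complex.exp_two_pi_mul_I, mul_one, Complex.norm_mul_exp_arg_mul_I]

lemma phi_eq_of {z : ℂ} {r φ : ℝ} (hr : 0 < r) (h0 : 0 < φ) (h2 : φ < 2 * Real.pi)
    (hz : z = (r : ℂ) * Complex.exp (φ * Complex.I)) :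
    ‖z‖ = r ∧ phi z = φ ∧ z.arg ≠ 0 := by
  have habs : ‖z‖ = r := by
    rw [hz, norm_mul, Complex.norm_exp_ofReal_mul_I, mul_one, Complex.norm_real,
      Real.norm_eq_abs, abs_of_pos hr]
  have hz0 : z ≠ 0 := by
    intro h; rw [h, norm_zero] at habs; exact hr.ne habs
  have hexp : Complex.exp ((φ : ℂ) * Complex.I) = Complex.exp ((phi z : ℂ) * Complex.I) := by
    have h1 := phi_spec hz0
    rw [habs] at h1
    have := hz.symm.trans h1
    exact mul_left_cancel₀ (by exact_mod_cast hr.ne') this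
  rw [Complex.exp_eq_exp_iff_exists_int] at hexp
  obtain ⟨n, hn⟩ := hexp
  have hreal : φ = phi z + n * (2 * Real.pi) := by
    have h1 : ((φ : ℂ) - (phi z + n * (2*Real.pi))) * Complex.I = 0 := by
      push_cast at hn ⊢
      rw [sub_mul, hn]; ring
    have h2 := (mul_eq_zero.mp h1).resolve_right Complex.I_ne_zero
    have h3 : ((φ - (phi z + n * (2*Real.pi)) : ℝ) : ℂ) = 0 := by push_cast; push_cast at h2; linear_combination h2
    have := Complex.ofReal_eq_zero.mp h3
    linarith
  have hpipos := Real.pi_pos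
  have hn0 : n = 0 := by
    rcases lt_trichotomy n 0 with h | h | h
    · have hn1 : n ≤ -1 := by omega
      have : (n : ℝ) ≤ -1 := by exact_mod_cast hn1
      nlinarith [phi_le z]
    · exact h
    · have : (1 : ℝ) ≤ n := by exact_mod_cast h
      nlinarith [phi_pos z]
  have hphi : phi z = φ := by rw [hreal, hn0]; push_cast; ring
  refine ⟨habs, hphi, ?_⟩
  intro h
  have : phi z = 2 * Real.pi := by unfold phi; rw [h]; simp
  rw [hphi] at this; linarith

lemma re_eq {z : ℂ} (hz : z ≠ 0) : z.re = ‖z‖ * Real.cos (phi z) := by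
  conv_lhs => rw [phi_spec hz]
  simp [Complex.mul_re, Complex.exp_ofReal_mul_I_re, Complex.exp_ofReal_mul_I_im]

lemma im_eq {z : ℂ} (hz : z ≠ 0) : z.im = ‖z‖ * Real.sin (phi z) := by
  conv_lhs => rw [phi_spec hz]
  simp [Complex.mul_im, Complex.exp_ofReal_mul_I_re, Complex.exp_ofReal_mul_I_im]


lemma abs_pos_ne {z : ℂ} (h : 1/2 < ‖z‖) : z ≠ 0 := by
  intro hz; rw [hz, norm_zero] at h; linarith

-- sign lemmas
lemma phi_lt_pi_of_im_pos {z : ℂ} (hz : z ≠ 0) (him : 0 < z.im) : phi z < Real.pi := by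
  have habs : 0 < ‖z‖ := by simpa [norm_pos_iff] using hz
  have hsin : 0 < Real.sin (phi z) := by
    have := im_eq hz; nlinarith
  by_contra hle
  push_neg at hle
  have h1 : Real.sin (phi z) = - Real.sin (phi z - Real.pi) := by
    rw [show phi z = (phi z - Real.pi) + Real.pi by ring] ; rw [Real.sin_add_pi]; ring_nf
  have h2 : 0 ≤ Real.sin (phi z - Real.pi) :=
    Real.sin_nonneg_of_nonneg_of_le_pi (by linarith) (by linarith [phi_le z])
  linarith [h1 ▸ hsin]

lemma pi_lt_phi_of_im_neg {z : ℂ} (hz : z ≠ 0) (him : z.im < 0) : Real.pi < phi z := by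
  have habs : 0 < ‖z‖ := by simpa [norm_pos_iff] using hz
  have hsin : Real.sin (phi z) < 0 := by
    have := im_eq hz; nlinarith
  by_contra hle
  push_neg at hle
  exact absurd (Real.sin_nonneg_of_nonneg_of_le_pi (phi_pos z).le hle) (by linarith)

lemma phi_mem_of_re_neg {z : ℂ} (hz : z ≠ 0) (hre : z.re < 0) :
    Real.pi / 2 < phi z ∧ phi z < 3 * Real.pi / 2 := by
  have habs : 0 < ‖z‖ := by simpa [norm_pos_iff] using hz
  have hcos : Real.cos (phi z) < 0 := by
    have := re_eq hz; nlinarith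
  constructor
  · by_contra hle
    push_neg at hle
    have : 0 ≤ Real.cos (phi z) :=
      Real.cos_nonneg_of_mem_Icc ⟨by linarith [phi_pos z, Real.pi_pos], hle⟩
    linarith
  · by_contra hle
    push_neg at hle
    have h1 : Real.cos (phi z) = Real.cos ((phi z - 2*Real.pi) + 2*Real.pi) := by ring_nf
    rw [Real.cos_add_two_pi] at h1
    have h2 : 0 ≤ Real.cos (phi z - 2*Real.pi) :=
      Real.cos_nonneg_of_mem_Icc ⟨by linarith, by linarith [phi_le z, Real.pi_pos]⟩
    linarith [h1 ▸ hcos]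

lemma phi_cases_of_re_nonneg {z : ℂ} (hz : z ≠ 0) (hre : 0 ≤ z.re) :
    phi z ≤ Real.pi / 2 ∨ 3 * Real.pi / 2 ≤ phi z := by
  by_contra h
  push_neg at h
  have hcos : Real.cos (phi z) < 0 :=
    Real.cos_neg_of_pi_div_two_lt_of_lt h.1 (by linarith [h.2])
  have habs : 0 < ‖z‖ := by simpa [norm_pos_iff] using hz
  have := re_eq hz; nlinarith

lemma phi_le_half_pi {z : ℂ} (hz : z ≠ 0) (hre : 0 ≤ z.re) (him : 0 < z.im) :
    phi z ≤ Real.pi / 2 := by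
  rcases phi_cases_of_re_nonneg hz hre with h | h
  · exact h
  · exact absurd (phi_lt_pi_of_im_pos hz him) (by intro hh; nlinarith [Real.pi_pos])

lemma three_half_pi_le {z : ℂ} (hz : z ≠ 0) (hre : 0 ≤ z.re) (him : z.im < 0) :
    3 * Real.pi / 2 ≤ phi z := by
  rcases phi_cases_of_re_nonneg hz hre with h | h
  · exact absurd (pi_lt_phi_of_im_neg hz him) (by intro hh; nlinarith [Real.pi_pos])
  · exact h

lemma arg_ne_of_im_ne {z : ℂ} (h : z.im ≠ 0) : z.arg ≠ 0 := by
  intro h0; exact h (Complex.arg_eq_zero_iff.mp h0).2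

lemma arg_ne_of_re_neg {z : ℂ} (h : z.re < 0) : z.arg ≠ 0 := by
  intro h0; linarith [(Complex.arg_eq_zero_iff.mp h0).1]

/-! domain sets -/

def Ann : Set ℂ := {z | 1/2 < ‖z‖ ∧ ‖z‖ < 1}
def Asec : Set ℂ := {z | z ∈ Ann ∧ (z.re < 0 ∨ z.im < 0)}
def D1 : Set (ℂ × ℂ) := {p | p.1 ∈ Ann ∧ 0 < p.1.im ∧ ‖p.2‖ < 1}
def D2 : Set (ℂ × ℂ) := {p | p.1 ∈ Ann ∧ p.1.re < 0 ∧ ‖p.2‖ < 3}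
def D3 : Set (ℂ × ℂ) := {p | p.1 ∈ Asec ∧ 2 < ‖p.2‖ ∧ ‖p.2‖ < 3}

lemma isOpen_Ann : IsOpen Ann := by
  have : Ann = (fun z : ℂ => ‖z‖) ⁻¹' (Ioo (1/2) 1) := rfl
  rw [this]
  exact (isOpen_Ioo).preimage continuous_norm

lemma isOpen_Asec : IsOpen Asec := by
  have : Asec = Ann ∩ ({z : ℂ | z.re < 0} ∪ {z : ℂ | z.im < 0}) := by
    ext z; simp [Asec, mem_setOf_eq]; tauto
  rw [this]
  exact isOpen_Ann.inter ((isOpen_lt Complex.continuous_re continuous_const).union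
    (isOpen_lt Complex.continuous_im continuous_const))

lemma isOpen_D1 : IsOpen D1 := by
  have : D1 = (Prod.fst ⁻¹' (Ann ∩ {z : ℂ | 0 < z.im})) ∩ (Prod.snd ⁻¹' {w : ℂ | ‖w‖ < 1}) := by
    ext p; simp [D1, mem_setOf_eq]; tauto
  rw [this]
  exact (((isOpen_Ann.inter (isOpen_lt continuous_const Complex.continuous_im))).preimage
    continuous_fst).inter ((isOpen_lt continuous_norm continuous_const).preimage continuous_snd)

lemma isOpen_D2 : IsOpen D2 := by
  have : D2 = (Prod.fst ⁻¹' (Ann ∩ {z : ℂ | z.re < 0})) ∩ (Prod.snd ⁻¹' {w : ℂ | ‖w‖ < 3}) := by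
    ext p; simp [D2, mem_setOf_eq]; tauto
  rw [this]
  exact (((isOpen_Ann.inter (isOpen_lt Complex.continuous_re continuous_const))).preimage
    continuous_fst).inter ((isOpen_lt continuous_norm continuous_const).preimage continuous_snd)

lemma isOpen_D3 : IsOpen D3 := by
  have : D3 = (Prod.fst ⁻¹' Asec) ∩ (Prod.snd ⁻¹' {w : ℂ | 2 < ‖w‖ ∧ ‖w‖ < 3}) := by
    ext p; simp [D3, Asec, Ann, mem_setOf_eq]
  rw [this]
  refine ((isOpen_Asec).preimage continuous_fst).inter (IsOpen.preimage continuous_snd ?_)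
  have : {w : ℂ | 2 < ‖w‖ ∧ ‖w‖ < 3} = (fun z : ℂ => ‖z‖) ⁻¹' (Ioo 2 3) := rfl
  rw [this]; exact isOpen_Ioo.preimage continuous_norm

/-! membership lemmas -/

lemma mem_domD_of {z w : ℂ} (h1 : 1/2 < ‖z‖) (h2 : ‖z‖ < 1)
    (h0 : z.arg ≠ 0)
    (c1 : phi z ≤ Real.pi / 2 → ‖w‖ < 1)
    (c2 : Real.pi / 2 < phi z → phi z < 3 * Real.pi / 2 → ‖w‖ < 3)
    (c3 : 3 * Real.pi / 2 ≤ phi z → 2 < ‖w‖ ∧ ‖w‖ < 3) :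
    (z, w) ∈ domD := by
  refine ⟨‖z‖, phi z, h1, h2, phi_pos z, ?_, phi_spec (abs_pos_ne h1), c1, c2, c3⟩
  rcases lt_or_eq_of_le (phi_le z) with h | h
  · exact h
  · exfalso
    unfold phi at h
    split at h
    · nlinarith [Complex.arg_le_pi z, Real.pi_pos]
    · exact h0 (by linarith)

lemma domD_unpack {p : ℂ × ℂ} (hp : p ∈ domD) :
    (1/2 < ‖p.1‖ ∧ ‖p.1‖ < 1) ∧ p.1.arg ≠ 0 ∧
    (phi p.1 ≤ Real.pi / 2 → ‖p.2‖ < 1) ∧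
    (Real.pi / 2 < phi p.1 → phi p.1 < 3 * Real.pi / 2 → ‖p.2‖ < 3) ∧
    (3 * Real.pi / 2 ≤ phi p.1 → 2 < ‖p.2‖ ∧ ‖p.2‖ < 3) := by
  obtain ⟨r, φ, hr1, hr2, hφ1, hφ2, hz, c1, c2, c3⟩ := hp
  obtain ⟨habs, hphi, harg⟩ := phi_eq_of (by linarith) hφ1 hφ2 hz
  rw [habs, hphi]
  exact ⟨⟨hr1, hr2⟩, harg, c1, c2, c3⟩

lemma domG_unpack {p : ℂ × ℂ} (hp : p ∈ domG) :
    (1/2 < ‖p.1‖ ∧ ‖p.1‖ < 1) ∧ p.1.arg ≠ 0 ∧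
    (phi p.1 ≤ Real.pi / 2 → ‖p.2‖ < 1) ∧
    (Real.pi / 2 < phi p.1 → ‖p.2‖ < 3) := by
  obtain ⟨r, φ, hr1, hr2, hφ1, hφ2, hz, c1, c2⟩ := hp
  obtain ⟨habs, hphi, harg⟩ := phi_eq_of (by linarith) hφ1 hφ2 hz
  rw [habs, hphi]
  exact ⟨⟨hr1, hr2⟩, harg, c1, c2⟩

lemma D1_subset : D1 ⊆ domD := by
  rintro ⟨z, w⟩ ⟨⟨h1, h2⟩, him, hw⟩
  have hz : z ≠ 0 := abs_pos_ne h1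
  have hπ := Real.pi_pos
  refine mem_domD_of h1 h2 (arg_ne_of_im_ne (by dsimp at him ⊢; linarith)) (fun _ => hw)
    (fun _ _ => by linarith) (fun h3 => ?_)
  exact absurd (phi_lt_pi_of_im_pos hz him) (by intro hh; nlinarith)

lemma D2_subset : D2 ⊆ domD := by
  rintro ⟨z, w⟩ ⟨⟨h1, h2⟩, hre, hw⟩
  have hz : z ≠ 0 := abs_pos_ne h1
  obtain ⟨ha, hb⟩ := phi_mem_of_re_neg hz hre
  exact mem_domD_of h1 h2 (arg_ne_of_re_neg hre) (fun h => absurd h (by linarith))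
    (fun _ _ => hw) (fun h => absurd h (by linarith))

lemma D3_subset : D3 ⊆ domD := by
  rintro ⟨z, w⟩ ⟨⟨⟨h1, h2⟩, hzs⟩, hw2, hw3⟩
  have hz : z ≠ 0 := abs_pos_ne h1
  have harg : z.arg ≠ 0 := by
    rcases hzs with h | h
    · exact arg_ne_of_re_neg h
    · exact arg_ne_of_im_ne (ne_of_lt h)
  have hhalf : Real.pi / 2 < phi z := by
    rcases hzs with h | h
    · exact (phi_mem_of_re_neg hz h).1
    · have := pi_lt_phi_of_im_neg hz h; nlinarith [Real.pi_pos]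
  exact mem_domD_of h1 h2 harg (fun h => absurd h (by linarith)) (fun _ _ => by linarith)
    (fun _ => ⟨hw2, hw3⟩)

/-- Cauchy-type bound on the full Fréchet derivative via directional derivatives. -/
lemma fderiv_norm_le {f : ℂ × ℂ → ℂ} {U : Set (ℂ × ℂ)} (hU : IsOpen U)
    (hf : DifferentiableOn ℂ f U) {q : ℂ × ℂ} {δ C : ℝ} (hδ : 0 < δ) (hC : 0 ≤ C)
    (hsub : Metric.closedBall q δ ⊆ U)
    (hbound : ∀ x ∈ Metric.closedBall q δ, ‖f x‖ ≤ C) :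
    ‖fderiv ℂ f q‖ ≤ C / δ := by
  have hqU : q ∈ U := hsub (Metric.mem_closedBall_self hδ.le)
  have hfq : HasFDerivAt f (fderiv ℂ f q) q :=
    (hf.differentiableAt (hU.mem_nhds hqU)).hasFDerivAt
  refine ContinuousLinearMap.opNorm_le_bound _ (div_nonneg hC hδ.le) (fun v => ?_)
  rcases eq_or_ne v 0 with rfl | hv
  · simp
  have hnv : (0:ℝ) < ‖v‖ := norm_pos_iff.mpr hv
  set u : ℂ × ℂ := ((‖v‖ : ℂ))⁻¹ • v with hu_def
  have hnu : ‖u‖ = 1 := by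
    rw [hu_def, norm_smul]
    simp [norm_inv, Complex.norm_real, Real.norm_eq_abs, abs_of_pos hnv,
      inv_mul_cancel₀ hnv.ne']
  have key : ‖fderiv ℂ f q u‖ ≤ C / δ := by
    set g : ℂ → ℂ := fun t => f (q + t • u) with hg_def
    have hmem : ∀ t : ℂ, ‖t‖ ≤ δ → q + t • u ∈ Metric.closedBall q δ := by
      intro t ht
      rw [Metric.mem_closedBall, dist_eq_norm]
      have : q + t • u - q = t • u := by ring_nf -- might fail; use abel
      rw [show q + t • u - q = t • u by abel, norm_smul, hnu, mul_one]
      simpa using ht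
    have hinner : ∀ t : ℂ, HasDerivAt (fun s : ℂ => q + s • u) u t := by
      intro t
      have h1 : HasDerivAt (fun s : ℂ => s • u) ((1:ℂ) • u) t :=
        (hasDerivAt_id t).smul_const u
      simpa using h1.const_add q
    have hgdiff : DifferentiableOn ℂ g (Metric.closedBall 0 δ) := by
      intro t ht
      have htm : q + t • u ∈ Metric.closedBall q δ := by
        apply hmem
        simpa [dist_zero_right] using Metric.mem_closedBall.mp ht
      have hfd : DifferentiableAt ℂ f (q + t • u) :=
        hf.differentiableAt (hU.mem_nhds (hsub htm))
      exact (hfd.comp t (hinner t).differentiableAt).differentiableWithinAt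
    have hdccl : DiffContOnCl ℂ g (Metric.ball 0 δ) := by
      rw [← closure_ball (0:ℂ) hδ.ne'] at hgdiff
      exact hgdiff.diffContOnCl
    have hsph : ∀ t ∈ Metric.sphere (0:ℂ) δ, ‖g t‖ ≤ C := by
      intro t ht
      apply hbound
      apply hmem
      have := Metric.mem_sphere.mp ht
      rw [dist_zero_right] at this
      exact le_of_eq this
    have hgd : HasDerivAt g (fderiv ℂ f q u) 0 := by
      have hfq' : HasFDerivAt f (fderiv ℂ f q) ((fun s : ℂ => q + s • u) 0) := by
        simpa using hfq
      exact hfq'.comp_hasDerivAt 0 (hinner 0)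
    have := Complex.norm_deriv_le_of_forall_mem_sphere_norm_le hδ hdccl hsph
    rwa [hgd.deriv] at this
  have hvu : fderiv ℂ f q v = (‖v‖ : ℂ) • fderiv ℂ f q u := by
    rw [hu_def, ← ContinuousLinearMap.map_smul, smul_smul]
    norm_cast
    rw [mul_inv_cancel₀ hnv.ne', one_smul]
  rw [hvu, norm_smul]
  simp only [Complex.norm_real, Real.norm_eq_abs, abs_of_pos hnv]
  calc ‖v‖ * ‖fderiv ℂ f q u‖ ≤ ‖v‖ * (C/δ) := by
        exact mul_le_mul_of_nonneg_left key hnv.le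
    _ = C / δ * ‖v‖ := by ring

open MeasureTheory Metric Topology

/-- The Cauchy-integral extension candidate. -/
def CInt (f : ℂ × ℂ → ℂ) (p : ℂ × ℂ) : ℂ :=
  (2 * Real.pi * Complex.I)⁻¹ • ∮ ζ in C(0, 5/2), (ζ - p.2)⁻¹ • f (p.1, ζ)

variable {f : ℂ × ℂ → ℂ}

lemma diffAt_of_D2 (hd : DifferentiableOn ℂ f domD) {p : ℂ × ℂ} (hp : p ∈ D2) :
    DifferentiableAt ℂ f p :=
  (hd.mono D2_subset).differentiableAt (isOpen_D2.mem_nhds hp)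

lemma diffAt_of_D1 (hd : DifferentiableOn ℂ f domD) {p : ℂ × ℂ} (hp : p ∈ D1) :
    DifferentiableAt ℂ f p :=
  (hd.mono D1_subset).differentiableAt (isOpen_D1.mem_nhds hp)

lemma diffAt_of_D3 (hd : DifferentiableOn ℂ f domD) {p : ℂ × ℂ} (hp : p ∈ D3) :
    DifferentiableAt ℂ f p :=
  (hd.mono D3_subset).differentiableAt (isOpen_D3.mem_nhds hp)

lemma sliceDiff (hd : DifferentiableOn ℂ f domD) {z ζ : ℂ} (hz : z ∈ Ann) (hre : z.re < 0)
    (hζ : ‖ζ‖ < 3) : DifferentiableAt ℂ (fun w => f (z, w)) ζ := by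
  have h1 : DifferentiableAt ℂ f ((fun w : ℂ => (z, w)) ζ) := diffAt_of_D2 hd ⟨hz, hre, hζ⟩
  exact h1.comp ζ ((differentiableAt_const z).prodMk differentiableAt_id)

/-- Cauchy integral formula: on the sector `re < 0` the integral reproduces `f`. -/
lemma CInt_eq_of_re_neg (hd : DifferentiableOn ℂ f domD) {z w : ℂ} (hz : z ∈ Ann)
    (hre : z.re < 0) (hw : ‖w‖ < 5/2) : CInt f (z, w) = f (z, w) := by
  have hwball : w ∈ Metric.ball (0:ℂ) (5/2) := by
    simpa [Metric.mem_ball, dist_zero_right] using hw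
  have hcont : ContinuousOn (fun ζ => f (z, ζ)) (Metric.closedBall 0 (5/2)) := by
    intro ζ hζ
    have h3 : ‖ζ‖ < 3 := by
      have := Metric.mem_closedBall.mp hζ
      rw [dist_zero_right] at this; linarith
    exact (sliceDiff hd hz hre h3).continuousAt.continuousWithinAt
  have hdiff : ∀ ζ ∈ Metric.ball (0:ℂ) (5/2) \ (∅ : Set ℂ),
      DifferentiableAt ℂ (fun ζ => f (z, ζ)) ζ := by
    intro ζ hζ
    have h3 : ‖ζ‖ < 3 := by
      have := Metric.mem_ball.mp hζ.1
      rw [dist_zero_right] at this; linarith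
    exact sliceDiff hd hz hre h3
  exact Complex.two_pi_I_inv_smul_circleIntegral_sub_inv_smul_of_differentiable_on_off_countable
    countable_empty hwball hcont hdiff

lemma norm_J_le : ‖((ContinuousLinearMap.fst ℂ ℂ ℂ).prod 0 : (ℂ × ℂ) →L[ℂ] ℂ × ℂ)‖ ≤ 1 := by
  apply ContinuousLinearMap.opNorm_le_bound _ zero_le_one
  intro v
  rw [one_mul]
  have : ‖(((ContinuousLinearMap.fst ℂ ℂ ℂ).prod 0 : (ℂ × ℂ) →L[ℂ] ℂ × ℂ)) v‖ = ‖v.1‖ := by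
    simp [Prod.norm_def]
  rw [this]
  exact norm_fst_le v

lemma norm_S_le : ‖(ContinuousLinearMap.snd ℂ ℂ ℂ : (ℂ × ℂ) →L[ℂ] ℂ)‖ ≤ 1 := by
  apply ContinuousLinearMap.opNorm_le_bound _ zero_le_one
  intro v
  rw [one_mul]
  exact norm_snd_le v

set_option maxHeartbeats 1000000 in
/-- Joint differentiability of the Cauchy integral on the sector times a disc. -/
lemma diffAt_CInt (hd : DifferentiableOn ℂ f domD) {x₀ : ℂ × ℂ} (hx : x₀.1 ∈ Asec)
    (hw : ‖x₀.2‖ < 5/2) : DifferentiableAt ℂ (CInt f) x₀ := by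
  classical
  obtain ⟨δ₀, hδ₀, hball₀⟩ := Metric.isOpen_iff.mp isOpen_Asec _ hx
  set ε₁ : ℝ := δ₀ / 3 with hε₁_def
  have hε₁ : 0 < ε₁ := by positivity
  have hcb₁ : Metric.closedBall x₀.1 (2 * ε₁) ⊆ Asec := by
    intro a ha
    apply hball₀
    rw [Metric.mem_ball]
    have := Metric.mem_closedBall.mp ha
    linarith
  set ε₂ : ℝ := (5/2 - ‖x₀.2‖) / 2 with hε₂_def
  have hε₂ : 0 < ε₂ := by simp only [hε₂_def]; linarith
  set ε : ℝ := min ε₁ ε₂ with hε_def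
  have hε : 0 < ε := lt_min hε₁ hε₂
  -- facts on the ball
  have hxfacts : ∀ x ∈ Metric.ball x₀ ε,
      x.1 ∈ Metric.closedBall x₀.1 ε₁ ∧ ‖x.2‖ + ε₂ ≤ 5/2 := by
    intro x hxb
    have hdist := Metric.mem_ball.mp hxb
    rw [Prod.dist_eq] at hdist
    have h1 : dist x.1 x₀.1 < ε := lt_of_le_of_lt (le_max_left _ _) hdist
    have h2 : dist x.2 x₀.2 < ε := lt_of_le_of_lt (le_max_right _ _) hdist
    constructor
    · exact Metric.mem_closedBall.mpr (le_trans h1.le (min_le_left _ _))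
    · have h3 : ‖x.2 - x₀.2‖ < ε₂ := by
        rw [← Complex.dist_eq]; exact lt_of_lt_of_le h2 (min_le_right _ _)
      have h4 : ‖x.2‖ ≤ ‖x₀.2‖ + ‖x.2 - x₀.2‖ := by
        calc ‖x.2‖ = ‖x₀.2 + (x.2 - x₀.2)‖ := by ring_nf
          _ ≤ _ := norm_add_le _ _
      simp only [hε₂_def] at h3 ⊢
      linarith
  -- compact set and bound for f
  set Kbig : Set (ℂ × ℂ) :=
    (Metric.closedBall x₀.1 (2 * ε₁)) ×ˢ {w : ℂ | 9/4 ≤ ‖w‖ ∧ ‖w‖ ≤ 11/4}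
    with hKbig_def
  have hKbigD3 : Kbig ⊆ D3 := by
    rintro ⟨a, b⟩ ⟨ha, hb⟩
    exact ⟨hcb₁ ha, by simp only [mem_setOf_eq] at hb; constructor <;> [linarith [hb.1]; linarith [hb.2]]⟩
  have hKbig_cpt : IsCompact Kbig := by
    apply (isCompact_closedBall _ _).prod
    apply Metric.isCompact_of_isClosed_isBounded
    · have : {w : ℂ | 9/4 ≤ ‖w‖ ∧ ‖w‖ ≤ 11/4} =
        (fun z : ℂ => ‖z‖) ⁻¹' (Icc (9/4) (11/4)) := rfl
      rw [this]
      exact isClosed_Icc.preimage continuous_norm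
    · apply Bornology.IsBounded.subset (Metric.isBounded_closedBall (x := (0:ℂ)) (r := 11/4))
      intro w hw'
      rw [Metric.mem_closedBall, dist_zero_right]
      exact hw'.2
  have hcontD3 : ContinuousOn f D3 := (hd.mono D3_subset).continuousOn
  obtain ⟨C, hC⟩ := hKbig_cpt.exists_bound_of_continuousOn (hcontD3.mono hKbigD3)
  set C' : ℝ := max C 0 with hC'_def
  have hC' : ∀ q ∈ Kbig, ‖f q‖ ≤ C' := fun q hq => le_trans (hC q hq) (le_max_left _ _)
  have hC'0 : 0 ≤ C' := le_max_right _ _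
  -- fderiv bound
  set δ : ℝ := min ε₁ (1/8) with hδ_def
  have hδ : 0 < δ := lt_min hε₁ (by norm_num)
  set M : ℝ := C' / δ with hM_def
  have hM0 : 0 ≤ M := div_nonneg hC'0 hδ.le
  have hfdbound : ∀ z' ∈ Metric.closedBall x₀.1 ε₁, ∀ θ : ℝ,
      ‖fderiv ℂ f (z', circleMap 0 (5/2) θ)‖ ≤ M := by
    intro z' hz' θ
    apply fderiv_norm_le isOpen_D3 (hd.mono D3_subset) hδ hC'0
    · -- closedBall (z', ζθ) δ ⊆ D3
      intro q hq
      apply hKbigD3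
      rw [Metric.mem_closedBall, Prod.dist_eq] at hq
      have hq1 : dist q.1 z' ≤ δ := le_trans (le_max_left _ _) hq
      have hq2 : dist q.2 (circleMap 0 (5/2) θ) ≤ δ := le_trans (le_max_right _ _) hq
      have hδ1 : δ ≤ ε₁ := min_le_left _ _
      have hδ2 : δ ≤ 1/8 := min_le_right _ _
      constructor
      · rw [Metric.mem_closedBall]
        calc dist q.1 x₀.1 ≤ dist q.1 z' + dist z' x₀.1 := dist_triangle _ _ _
          _ ≤ δ + ε₁ := add_le_add hq1 (Metric.mem_closedBall.mp hz')
          _ ≤ 2 * ε₁ := by linarith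
      · have habsζ : ‖circleMap 0 (5/2) θ‖ = 5/2 := by
          rw [norm_circleMap_zero]; norm_num
        have hdq : ‖q.2 - circleMap 0 (5/2) θ‖ ≤ 1/8 := by
          rw [← Complex.dist_eq]; linarith
        have hup : ‖q.2‖ ≤ 11/4 := by
          calc ‖q.2‖ = ‖circleMap 0 (5/2) θ + (q.2 - circleMap 0 (5/2) θ)‖ := by
                ring_nf
            _ ≤ ‖circleMap 0 (5/2) θ‖ + ‖q.2 - circleMap 0 (5/2) θ‖ :=
                norm_add_le _ _
            _ ≤ 5/2 + 1/8 := by rw [habsζ]; linarith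
            _ ≤ 11/4 := by norm_num
        have hlo : 9/4 ≤ ‖q.2‖ := by
          have h6 : ‖circleMap 0 (5/2) θ‖ ≤
              ‖q.2‖ + ‖circleMap 0 (5/2) θ - q.2‖ := by
            calc ‖circleMap 0 (5/2) θ‖
                = ‖q.2 + (circleMap 0 (5/2) θ - q.2)‖ := by ring_nf
              _ ≤ _ := norm_add_le _ _
          have h5 : ‖circleMap 0 (5/2) θ - q.2‖ ≤ 1/8 := by
            rw [← norm_neg]; simpa [neg_sub] using hdq
          rw [habsζ] at h6
          linarith
        exact ⟨hlo, hup⟩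
    · -- bound on the closed ball
      intro q hq
      apply hC'
      rw [Metric.mem_closedBall, Prod.dist_eq] at hq
      have hq1 : dist q.1 z' ≤ δ := le_trans (le_max_left _ _) hq
      have hq2 : dist q.2 (circleMap 0 (5/2) θ) ≤ δ := le_trans (le_max_right _ _) hq
      have hδ1 : δ ≤ ε₁ := min_le_left _ _
      have hδ2 : δ ≤ 1/8 := min_le_right _ _
      have habsζ : ‖circleMap 0 (5/2) θ‖ = 5/2 := by
        rw [norm_circleMap_zero]; norm_num
      constructor
      · rw [Metric.mem_closedBall]
        calc dist q.1 x₀.1 ≤ dist q.1 z' + dist z' x₀.1 := dist_triangle _ _ _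
          _ ≤ δ + ε₁ := add_le_add hq1 (Metric.mem_closedBall.mp hz')
          _ ≤ 2 * ε₁ := by linarith
      · have hdq : ‖q.2 - circleMap 0 (5/2) θ‖ ≤ 1/8 := by
          rw [← Complex.dist_eq]; linarith
        have hup : ‖q.2‖ ≤ 11/4 := by
          calc ‖q.2‖ = ‖circleMap 0 (5/2) θ + (q.2 - circleMap 0 (5/2) θ)‖ := by
                ring_nf
            _ ≤ ‖circleMap 0 (5/2) θ‖ + ‖q.2 - circleMap 0 (5/2) θ‖ :=
                norm_add_le _ _
            _ ≤ 5/2 + 1/8 := by rw [habsζ]; linarith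
            _ ≤ 11/4 := by norm_num
        have hlo : 9/4 ≤ ‖q.2‖ := by
          have h6 : ‖circleMap 0 (5/2) θ‖ ≤
              ‖q.2‖ + ‖circleMap 0 (5/2) θ - q.2‖ := by
            calc ‖circleMap 0 (5/2) θ‖
                = ‖q.2 + (circleMap 0 (5/2) θ - q.2)‖ := by ring_nf
              _ ≤ _ := norm_add_le _ _
          have h5 : ‖circleMap 0 (5/2) θ - q.2‖ ≤ 1/8 := by
            rw [← norm_neg]; simpa [neg_sub] using hdq
          rw [habsζ] at h6
          linarith
        exact ⟨hlo, hup⟩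
  -- the parametric integrand
  set J : (ℂ × ℂ) →L[ℂ] ℂ × ℂ := (ContinuousLinearMap.fst ℂ ℂ ℂ).prod 0 with hJ_def
  set S : (ℂ × ℂ) →L[ℂ] ℂ := ContinuousLinearMap.snd ℂ ℂ ℂ with hS_def
  set Φ : (ℂ × ℂ) → ℝ → ℂ := fun x θ =>
    (circleMap 0 (5/2) θ * Complex.I) *
      ((circleMap 0 (5/2) θ - x.2)⁻¹ * f (x.1, circleMap 0 (5/2) θ)) with hΦ_def
  set F' : (ℂ × ℂ) → ℝ → (ℂ × ℂ) →L[ℂ] ℂ := fun x θ =>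
    (circleMap 0 (5/2) θ * Complex.I) •
      (((circleMap 0 (5/2) θ - x.2)⁻¹ • ((fderiv ℂ f (x.1, circleMap 0 (5/2) θ)).comp J))
        + (f (x.1, circleMap 0 (5/2) θ)) • (((circleMap 0 (5/2) θ - x.2)^2)⁻¹ • S)) with hF'_def
  have habsζ : ∀ θ : ℝ, ‖circleMap 0 (5/2) θ‖ = 5/2 := fun θ => by
    rw [norm_circleMap_zero]; norm_num
  have hmemD3 : ∀ x ∈ Metric.ball x₀ ε, ∀ θ : ℝ, (x.1, circleMap 0 (5/2) θ) ∈ D3 := by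
    intro x hxb θ
    refine ⟨hcb₁ (Metric.closedBall_subset_closedBall (by linarith) (hxfacts x hxb).1), ?_, ?_⟩
    · rw [habsζ]; norm_num
    · rw [habsζ]; norm_num
  have hKbigmem : ∀ x ∈ Metric.ball x₀ ε, ∀ θ : ℝ, (x.1, circleMap 0 (5/2) θ) ∈ Kbig := by
    intro x hxb θ
    refine ⟨Metric.closedBall_subset_closedBall (by linarith) (hxfacts x hxb).1, ?_, ?_⟩
    · rw [habsζ]; norm_num
    · rw [habsζ]; norm_num
  have hne : ∀ x ∈ Metric.ball x₀ ε, ∀ θ : ℝ,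
      ε₂ ≤ ‖circleMap 0 (5/2) θ - x.2‖ ∧ circleMap 0 (5/2) θ - x.2 ≠ 0 := by
    intro x hxb θ
    have h2 := (hxfacts x hxb).2
    have h6 : ‖circleMap 0 (5/2) θ‖ ≤
        ‖circleMap 0 (5/2) θ - x.2‖ + ‖x.2‖ := by
      calc ‖circleMap 0 (5/2) θ‖
          = ‖(circleMap 0 (5/2) θ - x.2) + x.2‖ := by ring_nf
        _ ≤ _ := norm_add_le _ _
    rw [habsζ] at h6
    have hge : ε₂ ≤ ‖circleMap 0 (5/2) θ - x.2‖ := by linarith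
    refine ⟨hge, fun hzero => ?_⟩
    rw [hzero, norm_zero] at hge; linarith
  -- derivative of the integrand
  have hΦderiv : ∀ θ : ℝ, ∀ x ∈ Metric.ball x₀ ε, HasFDerivAt (fun y => Φ y θ) (F' x θ) x := by
    intro θ x hxb
    have hfd : HasFDerivAt f (fderiv ℂ f (x.1, circleMap 0 (5/2) θ)) (x.1, circleMap 0 (5/2) θ) :=
      (diffAt_of_D3 hd (hmemD3 x hxb θ)).hasFDerivAt
    have hin : HasFDerivAt (fun y : ℂ × ℂ => (y.1, circleMap 0 (5/2) θ)) J x :=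
      (hasFDerivAt_fst).prodMk (hasFDerivAt_const _ _)
    have hu : HasFDerivAt (fun y : ℂ × ℂ => f (y.1, circleMap 0 (5/2) θ))
        ((fderiv ℂ f (x.1, circleMap 0 (5/2) θ)).comp J) x := hfd.comp x hin
    have hv : HasFDerivAt (fun y : ℂ × ℂ => (circleMap 0 (5/2) θ - y.2)⁻¹)
        (((circleMap 0 (5/2) θ - x.2)^2)⁻¹ • S) x := by
      have hone : HasDerivAt (fun w : ℂ => circleMap 0 (5/2) θ - w) (-1 : ℂ) x.2 := by
        simpa using (hasDerivAt_id x.2).const_sub (circleMap 0 (5/2) θ)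
      have hinv1 : HasDerivAt (fun w : ℂ => (circleMap 0 (5/2) θ - w)⁻¹)
          (-(-1) / (circleMap 0 (5/2) θ - x.2)^2) x.2 := hone.inv (hne x hxb θ).2
      have hv0 : HasFDerivAt (fun y : ℂ × ℂ => (circleMap 0 (5/2) θ - y.2)⁻¹)
          ((-(-1) / (circleMap 0 (5/2) θ - x.2)^2) • S) x :=
        hinv1.comp_hasFDerivAt x hasFDerivAt_snd
      have heq : (-(-1 : ℂ)) / (circleMap 0 (5/2) θ - x.2)^2
          = ((circleMap 0 (5/2) θ - x.2)^2)⁻¹ := by rw [neg_neg, one_div]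
      rwa [heq] at hv0
    exact (hv.mul hu).const_mul _
  -- rewrite CInt as a parametric integral
  have hCInt_eq : ∀ x : ℂ × ℂ, CInt f x =
      (2 * Real.pi * Complex.I)⁻¹ • ∫ θ in Set.Ioc 0 (2*Real.pi), Φ x θ := by
    intro x
    rw [CInt, circleIntegral,
      intervalIntegral.integral_of_le (by positivity : (0:ℝ) ≤ 2*Real.pi)]
    congr 1
    apply MeasureTheory.integral_congr_ae
    apply Filter.EventuallyEq.of_eq
    funext θ
    simp only [hΦ_def, deriv_circleMap, smul_eq_mul]
  -- measurability and integrability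
  have hc1 : Continuous (circleMap 0 (5/2)) := continuous_circleMap _ _
  have hΦcont : ∀ x ∈ Metric.ball x₀ ε, Continuous (Φ x) := by
    intro x hxb
    have hfc : Continuous fun θ => f (x.1, circleMap 0 (5/2) θ) :=
      hcontD3.comp_continuous (continuous_const.prodMk hc1) fun θ => hmemD3 x hxb θ
    have hinv : Continuous fun θ => (circleMap 0 (5/2) θ - x.2)⁻¹ :=
      (hc1.sub continuous_const).inv₀ fun θ => (hne x hxb θ).2
    exact (hc1.mul continuous_const).mul (hinv.mul hfc)
  have hmeas : ∀ᶠ x in 𝓝 x₀,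
      AEStronglyMeasurable (Φ x) (volume.restrict (Set.Ioc 0 (2*Real.pi))) := by
    filter_upwards [Metric.ball_mem_nhds x₀ hε] with x hxb
    exact (hΦcont x hxb).aestronglyMeasurable
  have hx₀ball : x₀ ∈ Metric.ball x₀ ε := Metric.mem_ball_self hε
  have hint : Integrable (Φ x₀) (volume.restrict (Set.Ioc 0 (2*Real.pi))) :=
    (hΦcont x₀ hx₀ball).integrableOn_Ioc
  have hF'meas : AEStronglyMeasurable (F' x₀) (volume.restrict (Set.Ioc 0 (2*Real.pi))) := by
    apply Measurable.aestronglyMeasurable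
    have m1 : Measurable fun θ => fderiv ℂ f (x₀.1, circleMap 0 (5/2) θ) :=
      (measurable_fderiv ℂ f).comp (measurable_const.prodMk hc1.measurable)
    have m2 : Measurable fun θ => (fderiv ℂ f (x₀.1, circleMap 0 (5/2) θ)).comp J :=
      (((ContinuousLinearMap.compL ℂ (ℂ × ℂ) (ℂ × ℂ) ℂ).flip J).continuous.measurable).comp m1
    have m3 : Measurable fun θ => (circleMap 0 (5/2) θ - x₀.2)⁻¹ :=
      ((hc1.sub continuous_const).inv₀ fun θ => (hne x₀ hx₀ball θ).2).measurable
    have m4 : Measurable fun θ => f (x₀.1, circleMap 0 (5/2) θ) :=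
      (hcontD3.comp_continuous (continuous_const.prodMk hc1)
        fun θ => hmemD3 x₀ hx₀ball θ).measurable
    have m5 : Measurable fun θ => ((circleMap 0 (5/2) θ - x₀.2)^2)⁻¹ • S :=
      Measurable.smul_const (((hc1.sub continuous_const).pow 2).inv₀
        (fun θ => pow_ne_zero _ (hne x₀ hx₀ball θ).2)).measurable S
    have m6 : Measurable fun θ =>
        (circleMap 0 (5/2) θ - x₀.2)⁻¹ • ((fderiv ℂ f (x₀.1, circleMap 0 (5/2) θ)).comp J) :=
      continuous_smul.measurable.comp (m3.prodMk m2)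
    have m7 : Measurable fun θ =>
        f (x₀.1, circleMap 0 (5/2) θ) • (((circleMap 0 (5/2) θ - x₀.2)^2)⁻¹ • S) :=
      continuous_smul.measurable.comp (m4.prodMk m5)
    exact continuous_smul.measurable.comp
      (((hc1.mul continuous_const).measurable).prodMk (m6.add m7))
  -- the uniform bound
  set Kb : ℝ := (5/2) * (ε₂⁻¹ * M + C' * (ε₂⁻¹ * ε₂⁻¹)) with hKb_def
  have hF'bound : ∀ θ : ℝ, ∀ x ∈ Metric.ball x₀ ε, ‖F' x θ‖ ≤ Kb := by
    intro θ x hxb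
    have hinv_le : ‖(circleMap 0 (5/2) θ - x.2)⁻¹‖ ≤ ε₂⁻¹ := by
      rw [norm_inv]
      exact inv_anti₀ hε₂ (hne x hxb θ).1
    have hinv2_le : ‖((circleMap 0 (5/2) θ - x.2)^2)⁻¹‖ ≤ ε₂⁻¹ * ε₂⁻¹ := by
      rw [norm_inv, norm_pow, ← mul_inv]
      apply inv_anti₀ (by positivity)
      have h := (hne x hxb θ).1
      calc ε₂ * ε₂ ≤ ‖circleMap 0 (5/2) θ - x.2‖
            * ‖circleMap 0 (5/2) θ - x.2‖ := by nlinarith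
        _ = ‖circleMap 0 (5/2) θ - x.2‖ ^ 2 := by ring
    have hA : ‖(fderiv ℂ f (x.1, circleMap 0 (5/2) θ)).comp J‖ ≤ M := by
      calc ‖(fderiv ℂ f (x.1, circleMap 0 (5/2) θ)).comp J‖
          ≤ ‖fderiv ℂ f (x.1, circleMap 0 (5/2) θ)‖ * ‖J‖ := ContinuousLinearMap.opNorm_comp_le _ _
        _ ≤ M * 1 := mul_le_mul (hfdbound x.1 (hxfacts x hxb).1 θ) norm_J_le (norm_nonneg _) hM0
        _ = M := mul_one M
    have hfb : ‖f (x.1, circleMap 0 (5/2) θ)‖ ≤ C' := hC' _ (hKbigmem x hxb θ)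
    have hBle : ‖((circleMap 0 (5/2) θ - x.2)^2)⁻¹ • S‖ ≤ ε₂⁻¹ * ε₂⁻¹ := by
      refine le_trans (ContinuousLinearMap.opNorm_smul_le _ _) ?_
      calc ‖((circleMap 0 (5/2) θ - x.2)^2)⁻¹‖ * ‖S‖ ≤ (ε₂⁻¹ * ε₂⁻¹) * 1 :=
            mul_le_mul hinv2_le norm_S_le (norm_nonneg _) (by positivity)
        _ = ε₂⁻¹ * ε₂⁻¹ := mul_one _
    have hdθ : ‖circleMap 0 (5/2) θ * Complex.I‖ = 5/2 := by
      rw [norm_mul, Complex.norm_I, mul_one, habsζ]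
    have hterm1 : ‖(circleMap 0 (5/2) θ - x.2)⁻¹ •
        ((fderiv ℂ f (x.1, circleMap 0 (5/2) θ)).comp J)‖ ≤ ε₂⁻¹ * M := by
      refine le_trans (ContinuousLinearMap.opNorm_smul_le _ _) ?_
      exact mul_le_mul hinv_le hA (norm_nonneg _) (by positivity)
    have hterm2 : ‖f (x.1, circleMap 0 (5/2) θ) •
        (((circleMap 0 (5/2) θ - x.2)^2)⁻¹ • S)‖ ≤ C' * (ε₂⁻¹ * ε₂⁻¹) := by
      refine le_trans (ContinuousLinearMap.opNorm_smul_le _ _) ?_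
      exact mul_le_mul hfb hBle (norm_nonneg _) hC'0
    have hsum : ‖(circleMap 0 (5/2) θ - x.2)⁻¹ •
          ((fderiv ℂ f (x.1, circleMap 0 (5/2) θ)).comp J)
        + f (x.1, circleMap 0 (5/2) θ) • (((circleMap 0 (5/2) θ - x.2)^2)⁻¹ • S)‖
        ≤ ε₂⁻¹ * M + C' * (ε₂⁻¹ * ε₂⁻¹) :=
      le_trans (norm_add_le _ _) (add_le_add hterm1 hterm2)
    calc ‖F' x θ‖ ≤ ‖circleMap 0 (5/2) θ * Complex.I‖ *
          ‖(circleMap 0 (5/2) θ - x.2)⁻¹ •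
            ((fderiv ℂ f (x.1, circleMap 0 (5/2) θ)).comp J)
          + f (x.1, circleMap 0 (5/2) θ) • (((circleMap 0 (5/2) θ - x.2)^2)⁻¹ • S)‖ :=
            ContinuousLinearMap.opNorm_smul_le _ _
      _ ≤ (5/2) * (ε₂⁻¹ * M + C' * (ε₂⁻¹ * ε₂⁻¹)) := by
          rw [hdθ]
          exact mul_le_mul_of_nonneg_left hsum (by norm_num)
      _ = Kb := rfl
  have hbound : ∀ᵐ θ ∂(volume.restrict (Set.Ioc 0 (2*Real.pi))),
      ∀ x ∈ Metric.ball x₀ ε, ‖F' x θ‖ ≤ Kb := ae_of_all _ fun θ x hxb => hF'bound θ x hxb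
  have hboundint : Integrable (fun _ : ℝ => Kb) (volume.restrict (Set.Ioc 0 (2*Real.pi))) := by
    rw [← MeasureTheory.IntegrableOn]
    exact MeasureTheory.integrableOn_const measure_Ioc_lt_top.ne
  have hdiffae : ∀ᵐ θ ∂(volume.restrict (Set.Ioc 0 (2*Real.pi))),
      ∀ x ∈ Metric.ball x₀ ε, HasFDerivAt (Φ · θ) (F' x θ) x :=
    ae_of_all _ fun θ x hxb => hΦderiv θ x hxb
  have main := hasFDerivAt_integral_of_dominated_of_fderiv_le (Metric.ball_mem_nhds x₀ hε) hmeas hint hF'meas hbound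
    hboundint hdiffae
  have hmain : DifferentiableAt ℂ
      (fun x => ∫ θ in Set.Ioc 0 (2*Real.pi), Φ x θ) x₀ := main.differentiableAt
  have heq : CInt f = fun x =>
      (2 * Real.pi * Complex.I)⁻¹ • ∫ θ in Set.Ioc 0 (2*Real.pi), Φ x θ := funext hCInt_eq
  rw [heq]
  exact (hmain.const_smul ((2 * Real.pi * Complex.I)⁻¹ : ℂ) :)


lemma phi_lt_two_pi {z : ℂ} (h0 : z.arg ≠ 0) : phi z < 2 * Real.pi := by
  rcases lt_or_eq_of_le (phi_le z) with h | h
  · exact h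
  · exfalso
    unfold phi at h
    split at h
    · nlinarith [Complex.arg_le_pi z, Real.pi_pos]
    · exact h0 (by linarith)

lemma isOpen_AnnRe : IsOpen {z : ℂ | z ∈ Ann ∧ z.re < 0} := by
  have : {z : ℂ | z ∈ Ann ∧ z.re < 0} = Ann ∩ {z : ℂ | z.re < 0} := rfl
  rw [this]
  exact isOpen_Ann.inter (isOpen_lt Complex.continuous_re continuous_const)

lemma re_mul_exp (r φ : ℝ) : ((r : ℂ) * Complex.exp (φ * Complex.I)).re = r * Real.cos φ := by
  simp [Complex.mul_re, Complex.exp_ofReal_mul_I_re, Complex.exp_ofReal_mul_I_im]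

lemma im_mul_exp (r φ : ℝ) : ((r : ℂ) * Complex.exp (φ * Complex.I)).im = r * Real.sin φ := by
  simp [Complex.mul_im, Complex.exp_ofReal_mul_I_re, Complex.exp_ofReal_mul_I_im]

lemma abs_mul_exp (r φ : ℝ) (hr : 0 < r) :
    ‖(r : ℂ) * Complex.exp (φ * Complex.I)‖ = r := by
  rw [norm_mul, Complex.norm_exp_ofReal_mul_I, mul_one, Complex.norm_real, Real.norm_eq_abs, abs_of_pos hr]

lemma isPreconnected_Asec : IsPreconnected Asec := by
  have hmap : Continuous (fun q : ℝ × ℝ => (q.1 : ℂ) * Complex.exp (q.2 * Complex.I)) := by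
    apply Continuous.mul
    · exact Complex.continuous_ofReal.comp continuous_fst
    · exact Complex.continuous_exp.comp
        ((Complex.continuous_ofReal.comp continuous_snd).mul continuous_const)
  have hS1 : {z : ℂ | z ∈ Ann ∧ z.re < 0} =
      (fun q : ℝ × ℝ => (q.1 : ℂ) * Complex.exp (q.2 * Complex.I)) ''
        (Ioo (1/2 : ℝ) 1 ×ˢ Ioo (Real.pi/2) (3*Real.pi/2)) := by
    ext z
    constructor
    · rintro ⟨⟨h1, h2⟩, hre⟩
      have hz : z ≠ 0 := abs_pos_ne h1
      exact ⟨(‖z‖, phi z), ⟨⟨h1, h2⟩, phi_mem_of_re_neg hz hre⟩, (phi_spec hz).symm⟩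
    · rintro ⟨⟨r, φ⟩, ⟨⟨hr1, hr2⟩, hφ1, hφ2⟩, rfl⟩
      have hr : (0:ℝ) < r := by linarith
      have habs := abs_mul_exp r φ hr
      refine ⟨⟨by rw [habs]; exact hr1, by rw [habs]; exact hr2⟩, ?_⟩
      have hcos : Real.cos φ < 0 :=
        Real.cos_neg_of_pi_div_two_lt_of_lt hφ1 (by linarith)
      rw [re_mul_exp]
      nlinarith
  have hS2 : {z : ℂ | z ∈ Ann ∧ z.im < 0} =
      (fun q : ℝ × ℝ => (q.1 : ℂ) * Complex.exp (q.2 * Complex.I)) ''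
        (Ioo (1/2 : ℝ) 1 ×ˢ Ioo Real.pi (2*Real.pi)) := by
    ext z
    constructor
    · rintro ⟨⟨h1, h2⟩, him⟩
      have hz : z ≠ 0 := abs_pos_ne h1
      refine ⟨(‖z‖, phi z), ⟨⟨h1, h2⟩, pi_lt_phi_of_im_neg hz him,
        phi_lt_two_pi (arg_ne_of_im_ne (ne_of_lt him))⟩, (phi_spec hz).symm⟩
    · rintro ⟨⟨r, φ⟩, ⟨⟨hr1, hr2⟩, hφ1, hφ2⟩, rfl⟩
      have hr : (0:ℝ) < r := by linarith
      have habs := abs_mul_exp r φ hr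
      refine ⟨⟨by rw [habs]; exact hr1, by rw [habs]; exact hr2⟩, ?_⟩
      have hsin : Real.sin φ < 0 := by
        have h1 : Real.sin (φ - Real.pi) = -Real.sin φ := Real.sin_sub_pi φ
        have h2 : 0 < Real.sin (φ - Real.pi) :=
          Real.sin_pos_of_pos_of_lt_pi (by linarith) (by linarith)
        linarith
      rw [im_mul_exp]
      nlinarith
  have hpc1 : IsPreconnected {z : ℂ | z ∈ Ann ∧ z.re < 0} := by
    rw [hS1]
    exact (((convex_Ioo _ _).prod (convex_Ioo _ _)).isPreconnected).image _ hmap.continuousOn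
  have hpc2 : IsPreconnected {z : ℂ | z ∈ Ann ∧ z.im < 0} := by
    rw [hS2]
    exact (((convex_Ioo _ _).prod (convex_Ioo _ _)).isPreconnected).image _ hmap.continuousOn
  have hunion : Asec = {z : ℂ | z ∈ Ann ∧ z.re < 0} ∪ {z : ℂ | z ∈ Ann ∧ z.im < 0} := by
    ext z; simp only [Asec, mem_setOf_eq, mem_union]; tauto
  set z₀ : ℂ := ⟨-(1/2), -(1/2)⟩ with hz₀_def
  have hz₀abs : ‖z₀‖ = Real.sqrt (1/2) := by
    rw [Complex.norm_def, Complex.normSq_apply]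
    norm_num
  have habs_bounds : 1/2 < ‖z₀‖ ∧ ‖z₀‖ < 1 := by
    rw [hz₀abs]
    have h1 := Real.sq_sqrt (show (0:ℝ) ≤ 1/2 by norm_num)
    have h2 := Real.sqrt_nonneg (1/2 : ℝ)
    constructor <;> nlinarith
  have hz₀1 : z₀ ∈ {z : ℂ | z ∈ Ann ∧ z.re < 0} := ⟨habs_bounds, by norm_num [hz₀_def]⟩
  have hz₀2 : z₀ ∈ {z : ℂ | z ∈ Ann ∧ z.im < 0} := ⟨habs_bounds, by norm_num [hz₀_def]⟩
  rw [hunion]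
  exact hpc1.union z₀ hz₀1 hz₀2 hpc2

/-- By the identity theorem, the Cauchy integral agrees with `f` on the whole sector
times the annulus. -/
lemma CInt_eq_on_annulus (hd : DifferentiableOn ℂ f domD) {z w : ℂ} (hzA : z ∈ Asec)
    (h2 : 2 < ‖w‖) (h5 : ‖w‖ < 5/2) : CInt f (z, w) = f (z, w) := by
  set h : ℂ → ℂ := fun t => CInt f (t, w) - f (t, w) with hh
  have hdh : DifferentiableOn ℂ h Asec := by
    intro t ht
    have ha : DifferentiableAt ℂ (fun t : ℂ => CInt f (t, w)) t := by
      have hjoint := diffAt_CInt hd (x₀ := (t, w)) ht (by linarith)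
      exact DifferentiableAt.comp (g := CInt f) t hjoint (differentiableAt_id.prodMk (differentiableAt_const w) :
        DifferentiableAt ℂ (fun t : ℂ => (t, w)) t)
    have hb : DifferentiableAt ℂ (fun t : ℂ => f (t, w)) t := by
      have hft := diffAt_of_D3 hd (p := (t, w)) ⟨ht, h2, by linarith⟩
      exact hft.comp t (differentiableAt_id.prodMk (differentiableAt_const w))
    exact (ha.sub hb).differentiableWithinAt
  have hanalytic : AnalyticOnNhd ℂ h Asec := hdh.analyticOnNhd isOpen_Asec
  have habs34 : ‖(-(3/4) : ℂ)‖ = 3/4 := by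
    rw [norm_neg,
      show ((3/4 : ℂ)) = ((3/4 : ℝ) : ℂ) by norm_num, Complex.norm_real, Real.norm_eq_abs]
    norm_num
  have hz₀Ann : (-(3/4) : ℂ) ∈ Ann := by
    constructor <;> rw [habs34] <;> norm_num
  have hz₀re : (-(3/4) : ℂ).re < 0 := by norm_num
  have hz₀mem : (-(3/4) : ℂ) ∈ Asec := ⟨hz₀Ann, Or.inl hz₀re⟩
  have hev : h =ᶠ[𝓝 (-(3/4) : ℂ)] 0 := by
    apply Filter.eventuallyEq_of_mem (isOpen_AnnRe.mem_nhds ⟨hz₀Ann, hz₀re⟩)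
    intro t ht
    show CInt f (t, w) - f (t, w) = 0
    rw [CInt_eq_of_re_neg hd ht.1 ht.2 (by linarith), sub_self]
  have heq := hanalytic.eqOn_zero_of_preconnected_of_eventuallyEq_zero
    isPreconnected_Asec hz₀mem hev
  have hz := heq hzA
  simpa [hh, sub_eq_zero] using hz




end Stmt6Aux

open Stmt6Aux

theorem stmt6 (f : ℂ × ℂ → ℂ) (hf : f ∈ Acl domD) :
    ∃ F : ℂ × ℂ → ℂ, DifferentiableOn ℂ F domG ∧ ∀ p ∈ domD, F p = f p := by
  classical
  obtain ⟨-, hd⟩ := hf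
  set Fg : ℂ × ℂ → ℂ := fun p =>
    if ‖p.2‖ < 5/2 ∧ (p.1.re < 0 ∨ p.1.im < 0) then CInt f p else f p with hFg_def
  have hCopen : IsOpen {p : ℂ × ℂ | ‖p.2‖ < 5/2 ∧ (p.1.re < 0 ∨ p.1.im < 0)} := by
    have : {p : ℂ × ℂ | ‖p.2‖ < 5/2 ∧ (p.1.re < 0 ∨ p.1.im < 0)} =
        (Prod.snd ⁻¹' {w : ℂ | ‖w‖ < 5/2}) ∩
        (Prod.fst ⁻¹' ({z : ℂ | z.re < 0} ∪ {z : ℂ | z.im < 0})) := by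
      ext p; simp [mem_setOf_eq]
    rw [this]
    exact (((isOpen_lt continuous_norm continuous_const).preimage continuous_snd)).inter
      (((isOpen_lt Complex.continuous_re continuous_const).union
        (isOpen_lt Complex.continuous_im continuous_const)).preimage continuous_fst)
  refine ⟨Fg, ?_, ?_⟩
  · -- differentiability on G
    intro p hp
    apply DifferentiableAt.differentiableWithinAt
    obtain ⟨⟨hA1, hA2⟩, harg, c1, c2⟩ := domG_unpack hp
    have hz : p.1 ≠ 0 := abs_pos_ne hA1
    by_cases h1 : p.1.re < 0 ∨ p.1.im < 0
    · by_cases h2 : ‖p.2‖ < 5/2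
      · -- use CInt
        have hdiff : DifferentiableAt ℂ (CInt f) p := diffAt_CInt hd ⟨⟨hA1, hA2⟩, h1⟩ h2
        have hev : Fg =ᶠ[nhds p] CInt f := by
          apply Filter.eventuallyEq_of_mem (hCopen.mem_nhds ⟨h2, h1⟩)
          intro q hq
          exact if_pos hq
        exact hdiff.congr_of_eventuallyEq hev
      · -- |p.2| ≥ 5/2 : use f
        push_neg at h2
        have hphi : Real.pi / 2 < phi p.1 := by
          rcases h1 with hre | him
          · exact (phi_mem_of_re_neg hz hre).1
          · have := pi_lt_phi_of_im_neg hz him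
            nlinarith [Real.pi_pos]
        have h3 : ‖p.2‖ < 3 := c2 hphi
        have hdf : DifferentiableAt ℂ f p :=
          diffAt_of_D3 hd ⟨⟨⟨hA1, hA2⟩, h1⟩, by linarith, h3⟩
        have hNopen : IsOpen {q : ℂ × ℂ | q.1 ∈ Ann ∧ 2 < ‖q.2‖} := by
          have : {q : ℂ × ℂ | q.1 ∈ Ann ∧ 2 < ‖q.2‖} =
              (Prod.fst ⁻¹' Ann) ∩ (Prod.snd ⁻¹' {w : ℂ | 2 < ‖w‖}) := by
            ext q; simp [mem_setOf_eq]
          rw [this]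
          exact (isOpen_Ann.preimage continuous_fst).inter
            ((isOpen_lt continuous_const continuous_norm).preimage continuous_snd)
        have hev : Fg =ᶠ[nhds p] f := by
          apply Filter.eventuallyEq_of_mem
            (hNopen.mem_nhds ⟨⟨hA1, hA2⟩, by linarith⟩)
          rintro q ⟨hq1, hq2⟩
          by_cases hq : ‖q.2‖ < 5/2 ∧ (q.1.re < 0 ∨ q.1.im < 0)
          · have := CInt_eq_on_annulus hd (z := q.1) (w := q.2) ⟨hq1, hq.2⟩ hq2 hq.1
            show (if _ then _ else _) = f q
            rw [if_pos hq]
            simpa using this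
          · exact if_neg hq
        exact hdf.congr_of_eventuallyEq hev
    · -- first quadrant : use f
      push_neg at h1
      obtain ⟨h1re, h1im⟩ := h1
      have himne : p.1.im ≠ 0 := by
        intro h0
        exact harg (Complex.arg_eq_zero_iff.mpr ⟨h1re, h0⟩)
      have him : 0 < p.1.im := lt_of_le_of_ne h1im (Ne.symm himne)
      have hφ : phi p.1 ≤ Real.pi / 2 := phi_le_half_pi hz h1re him
      have hw1 : ‖p.2‖ < 1 := c1 hφ
      have hdf : DifferentiableAt ℂ f p := diffAt_of_D1 hd ⟨⟨hA1, hA2⟩, him, hw1⟩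
      have hNopen : IsOpen {q : ℂ × ℂ | q.1 ∈ Ann ∧ 0 < q.1.im ∧ ‖q.2‖ < 5/2} := by
        have : {q : ℂ × ℂ | q.1 ∈ Ann ∧ 0 < q.1.im ∧ ‖q.2‖ < 5/2} =
            (Prod.fst ⁻¹' (Ann ∩ {z : ℂ | 0 < z.im})) ∩
            (Prod.snd ⁻¹' {w : ℂ | ‖w‖ < 5/2}) := by
          ext q; simp [mem_setOf_eq]; tauto
        rw [this]
        exact ((isOpen_Ann.inter (isOpen_lt continuous_const Complex.continuous_im)).preimage
          continuous_fst).inter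
          ((isOpen_lt continuous_norm continuous_const).preimage continuous_snd)
      have hev : Fg =ᶠ[nhds p] f := by
        apply Filter.eventuallyEq_of_mem
          (hNopen.mem_nhds ⟨⟨hA1, hA2⟩, him, by linarith⟩)
        rintro q ⟨hq1, hq2, hq3⟩
        by_cases hq : ‖q.2‖ < 5/2 ∧ (q.1.re < 0 ∨ q.1.im < 0)
        · have hqre : q.1.re < 0 := by
            rcases hq.2 with h | h
            · exact h
            · linarith
          have := CInt_eq_of_re_neg hd (z := q.1) (w := q.2) hq1 hqre hq.1
          show (if _ then _ else _) = f q
          rw [if_pos hq]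
          simpa using this
        · exact if_neg hq
      exact hdf.congr_of_eventuallyEq hev
  · -- agreement on D
    intro p hp
    obtain ⟨⟨hA1, hA2⟩, harg, c1, c2, c3⟩ := domD_unpack hp
    have hz : p.1 ≠ 0 := abs_pos_ne hA1
    show (if _ then _ else _) = f p
    by_cases hcond : ‖p.2‖ < 5/2 ∧ (p.1.re < 0 ∨ p.1.im < 0)
    · rw [if_pos hcond]
      by_cases hre : p.1.re < 0
      · have := CInt_eq_of_re_neg hd (z := p.1) (w := p.2) ⟨hA1, hA2⟩ hre hcond.1
        simpa using this
      · have him : p.1.im < 0 := by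
          rcases hcond.2 with h | h
          · exact absurd h hre
          · exact h
        rw [not_lt] at hre
        have hphi : 3 * Real.pi / 2 ≤ phi p.1 := three_half_pi_le hz hre him
        have h2 := (c3 hphi).1
        have := CInt_eq_on_annulus hd (z := p.1) (w := p.2) ⟨⟨hA1, hA2⟩, Or.inr him⟩ h2 hcond.1
        simpa using this
    · rw [if_neg hcond]
end
end

section
/- For every function f holomorphic on an open neighborhood of cl D one has sup_{∂D} |f| = sup_{∂D \ (I₀ × 𝔻)} |f|, where I₀ × 𝔻 = {(x, w) : x ∈ (1/2, 1), |w| < 1} is a relatively open subset of ∂D. -/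
open Set Complex

noncomputable section

open Metric Filter Topology in
lemma not_mem_domD {x : ℝ} (hx0 : 0 < x) (w : ℂ) : ((x:ℂ), w) ∉ domD := by
  rintro ⟨r, φ, hr1, hr2, hφ0, hφ2, h1, -⟩
  simp only at h1
  have hr0' : (0:ℝ) < r := lt_trans (by norm_num) hr1
  have habs : x = r := by
    have := congrArg (‖·‖) h1
    simpa [Complex.norm_exp, abs_of_pos hx0, abs_of_pos hr0'] using this
  have hr0 : (r:ℂ) ≠ 0 := by exact_mod_cast ne_of_gt hr0'
  have hexp : Complex.exp (φ * Complex.I) = 1 := by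
    refine mul_left_cancel₀ hr0 ?_
    rw [mul_one, ← h1]
    exact_mod_cast congrArg Complex.ofReal habs
  rw [Complex.exp_eq_one_iff] at hexp
  obtain ⟨n, hn⟩ := hexp
  have hφn : φ = n * (2 * Real.pi) := by
    have h := congrArg Complex.im hn
    simpa using h
  have hπ : (0:ℝ) < 2 * Real.pi := by positivity
  have h1' : (0:ℝ) < (n:ℝ) * (2*Real.pi) := hφn ▸ hφ0
  have h2' : (n:ℝ) * (2*Real.pi) < 2*Real.pi := hφn ▸ hφ2
  have hn1 : (0:ℝ) < (n:ℝ) := by nlinarith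
  have hn2 : (n:ℝ) < 1 := by nlinarith
  have hn1' : (0:ℤ) < n := by exact_mod_cast hn1
  have hn2' : (n:ℤ) < 1 := by exact_mod_cast hn2
  omega

open Metric Filter Topology in
lemma mem_closure_ball_part {x : ℝ} (hx1 : 1/2 < x) (hx2 : x < 1) {w : ℂ}
    (hw : ‖w‖ < 1) : ((x:ℂ), w) ∈ closure domD := by
  refine mem_closure_of_tendsto (f := fun φ : ℝ => ((x:ℂ) * Complex.exp (φ * Complex.I), w))
    (b := 𝓝[>] (0:ℝ)) ?_ ?_
  · have h : Continuous fun φ : ℝ => ((x:ℂ) * Complex.exp (φ * Complex.I), w) := by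
      continuity
    have h0 := h.tendsto 0
    simpa using h0.mono_left nhdsWithin_le_nhds
  · filter_upwards [Ioo_mem_nhdsGT (by positivity : (0:ℝ) < Real.pi/2)] with φ hφ
    refine ⟨x, φ, hx1, hx2, hφ.1, ?_, rfl, fun _ => hw, ?_, ?_⟩
    · nlinarith [Real.pi_gt_three, hφ.2]
    · intro h _; exact absurd (h.trans hφ.2) (lt_irrefl _)
    · intro h; nlinarith [Real.pi_gt_three, hφ.2]

open Metric Filter Topology in
lemma mem_closure_closedBall {x : ℝ} (hx1 : 1/2 < x) (hx2 : x < 1) {w : ℂ}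
    (hw : ‖w‖ ≤ 1) : ((x:ℂ), w) ∈ closure domD := by
  have h1 : ({((x:ℂ))} : Set ℂ) ×ˢ Metric.ball (0:ℂ) 1 ⊆ closure domD := by
    rintro ⟨a, b⟩ ⟨ha, hb⟩
    simp only [mem_singleton_iff] at ha
    subst ha
    have : ‖b‖ < 1 := by exact mem_ball_zero_iff.mp hb
    exact mem_closure_ball_part hx1 hx2 this
  have h2 : ((x:ℂ), w) ∈ closure (({((x:ℂ))} : Set ℂ) ×ˢ Metric.ball (0:ℂ) 1) := by
    rw [closure_prod_eq, closure_singleton, closure_ball (0:ℂ) one_ne_zero]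
    exact ⟨rfl, mem_closedBall_zero_iff.mpr (by exact hw)⟩
  exact closure_minimal h1 isClosed_closure h2

open Metric Filter Topology in
lemma domD_bounded : Bornology.IsBounded domD := by
  refine (Metric.isBounded_closedBall (x := (0 : ℂ × ℂ)) (r := 3)).subset ?_
  rintro ⟨z, w⟩ ⟨r, φ, hr1, hr2, hφ0, hφ2, h1, h2, h3, h4⟩
  simp only at h1 h2 h3 h4
  rw [mem_closedBall_zero_iff, Prod.norm_def]
  have hz : ‖z‖ ≤ 3 := by
    rw [h1]
    simp only [norm_mul, Complex.norm_exp, Complex.norm_real, Real.norm_eq_abs]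
    have : |r| = r := abs_of_pos (lt_trans (by norm_num) hr1)
    rw [this]
    simp only [Complex.mul_I_re, Complex.ofReal_im, neg_zero, Real.exp_zero, mul_one]
    linarith
  have hw : ‖w‖ ≤ 3 := by
    rcases le_or_gt φ (Real.pi / 2) with h | h
    · linarith [h2 h]
    · rcases lt_or_ge φ (3 * Real.pi / 2) with h' | h'
      · linarith [h3 h h']
      · linarith [(h4 h').2]
  exact max_le hz hw

open Metric Filter Topology in
theorem stmt11 (f : ℂ × ℂ → ℂ) (hf : f ∈ Ocl domD) :
    sSup ((fun p => ‖f p‖) '' frontier domD) =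
      sSup ((fun p => ‖f p‖) '' (frontier domD \
        {p : ℂ × ℂ | (∃ x : ℝ, 1 / 2 < x ∧ x < 1 ∧ p.1 = (x : ℂ)) ∧ ‖p.2‖ < 1})) := by
  obtain ⟨U, hUopen, hUsub, hfd⟩ := hf
  set slit : Set (ℂ × ℂ) :=
    {p : ℂ × ℂ | (∃ x : ℝ, 1 / 2 < x ∧ x < 1 ∧ p.1 = (x : ℂ)) ∧ ‖p.2‖ < 1} with hslit
  set g : ℂ × ℂ → ℝ := fun p => ‖f p‖ with hg
  set A := g '' (frontier domD \ slit) with hA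
  set B := g '' frontier domD with hB
  have hfrc : IsCompact (frontier domD) := by
    refine (domD_bounded.isCompact_closure).of_isClosed_subset isClosed_frontier
      frontier_subset_closure
  have hcontf : ContinuousOn g (closure domD) :=
    continuous_norm.comp_continuousOn (hfd.continuousOn.mono hUsub)
  -- a point of frontier \ slit
  have hmem_frontier : ∀ (x : ℝ), 1/2 < x → x < 1 → ∀ w : ℂ, ‖w‖ ≤ 1 →
      ((x:ℂ), w) ∈ frontier domD := by
    intro x hx1 hx2 w hw
    rw [frontier, mem_diff]
    exact ⟨mem_closure_closedBall hx1 hx2 hw,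
      fun h => not_mem_domD (by linarith) w (interior_subset h)⟩
  have hAne : A.Nonempty := by
    refine ⟨g (((3/4 : ℝ):ℂ), 1), ⟨(((3/4 : ℝ):ℂ), 1), ⟨?_, ?_⟩, rfl⟩⟩
    · exact hmem_frontier (3/4) (by norm_num) (by norm_num) 1 (by simp)
    · simp [hslit]
  have hAsubB : A ⊆ B := image_mono diff_subset
  have hBbdd : BddAbove B :=
    (hfrc.image_of_continuousOn (hcontf.mono frontier_subset_closure)).bddAbove
  have hAbdd : BddAbove A := hBbdd.mono hAsubB
  have hkey : ∀ b ∈ B, b ≤ sSup A := by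
    rintro b ⟨p, hp, rfl⟩
    by_cases hs : p ∈ slit
    · obtain ⟨⟨x, hx1, hx2, hpx⟩, hpw⟩ := hs
      have hbnd : ∀ ζ ∈ closure (Metric.ball (0:ℂ) 1), ‖f ((x:ℂ), ζ)‖ ≤ sSup A := by
        intro ζ hζ
        refine Complex.norm_le_of_forall_mem_frontier_norm_le (f := fun ζ : ℂ => f ((x:ℂ), ζ)) Metric.isBounded_ball ?_ ?_ hζ
        · have hdiff : DifferentiableOn ℂ (fun ζ : ℂ => f ((x:ℂ), ζ))
              (Metric.closedBall (0:ℂ) 1) := by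
            intro ζ' hζ'
            have hmem : ((x:ℂ), ζ') ∈ U := hUsub (mem_closure_closedBall hx1 hx2
              (by exact mem_closedBall_zero_iff.mp hζ'))
            exact ((hfd.differentiableAt (hUopen.mem_nhds hmem)).comp ζ'
              ((differentiableAt_const _).prodMk differentiableAt_id)).differentiableWithinAt
          exact ⟨hdiff.mono Metric.ball_subset_closedBall,
            by rw [closure_ball _ one_ne_zero]; exact hdiff.continuousOn⟩
        · intro ζ' hζ'
          rw [frontier_ball _ one_ne_zero] at hζ'
          have habs : ‖ζ'‖ = 1 := by
            exact mem_sphere_zero_iff_norm.mp hζ'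
          refine le_csSup hAbdd ⟨((x:ℂ), ζ'), ⟨?_, ?_⟩, rfl⟩
          · exact hmem_frontier x hx1 hx2 ζ' (le_of_eq habs)
          · rintro ⟨-, habs'⟩
            simp only at habs'
            rw [habs] at habs'
            exact lt_irrefl 1 habs'
      have hp2 : p = ((x:ℂ), p.2) := Prod.ext hpx rfl
      have : ‖f p‖ = ‖f ((x:ℂ), p.2)‖ := by
        rw [← hp2]
      rw [hg]; simp only
      rw [this]
      exact hbnd p.2 (subset_closure (mem_ball_zero_iff.mpr
        (by exact hpw)))
    · exact le_csSup hAbdd ⟨p, ⟨hp, hs⟩, rfl⟩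
  exact le_antisymm (csSup_le (hAne.mono hAsubB) hkey) (csSup_le_csSup hBbdd hAne hAsubB)
end
end

section
/- For every function f continuous on cl D and holomorphic on D one has sup_{∂D} |f| = sup_{∂D \ (I₀ × 𝔻)} |f|, where I₀ × 𝔻 = {(x, w) : x ∈ (1/2, 1), |w| < 1} is a relatively open subset of ∂D. -/
open Set Complex

noncomputable section

/-! ### Auxiliary lemmas -/

lemma aux_mem_domD {r φ : ℝ} {w : ℂ} (h1 : 1/2 < r) (h2 : r < 1) (h3 : 0 < φ)
    (h4 : φ < Real.pi / 2) (hw : ‖w‖ < 1) :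
    (((r : ℂ) * Complex.exp (φ * Complex.I), w) : ℂ × ℂ) ∈ domD := by
  have hpi := Real.pi_pos
  exact ⟨r, φ, h1, h2, h3, by linarith, rfl, fun _ => hw,
    fun h _ => absurd h (not_lt.2 h4.le), fun h => absurd h (not_le.2 (by linarith))⟩

lemma aux_unique {r r' φ φ' : ℝ} (hr : 0 < r) (hr' : 0 < r')
    (hφ1 : 0 < φ) (hφ2 : φ < 2 * Real.pi) (hφ'1 : 0 < φ') (hφ'2 : φ' < 2 * Real.pi)
    (h : (r : ℂ) * Complex.exp (φ * Complex.I) = (r' : ℂ) * Complex.exp (φ' * Complex.I)) :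
    φ = φ' := by
  have hpi := Real.pi_pos
  have hab : ‖(r:ℂ) * Complex.exp (φ * Complex.I)‖ = r := by
    simp [Complex.norm_exp, abs_of_pos hr]
  have hab' : ‖(r':ℂ) * Complex.exp (φ' * Complex.I)‖ = r' := by
    simp [Complex.norm_exp, abs_of_pos hr']
  have hrr : r = r' := by rw [← hab, h, hab']
  have hexp : Complex.exp ((φ:ℂ) * Complex.I) = Complex.exp ((φ':ℂ) * Complex.I) := by
    apply mul_left_cancel₀ (Complex.ofReal_ne_zero.2 hr.ne')
    rw [h, hrr]
  obtain ⟨n, hn⟩ := Complex.exp_eq_exp_iff_exists_int.1 hexp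
  have him : φ = φ' + n * (2 * Real.pi) := by
    have := congrArg Complex.im hn
    simpa using this
  have hn1 : (-1 : ℝ) < n := by nlinarith
  have hn2 : (n : ℝ) < 1 := by nlinarith
  have hn1' : (-1 : ℤ) < n := by exact_mod_cast hn1
  have hn2' : (n : ℤ) < 1 := by exact_mod_cast hn2
  have hn0 : n = 0 := by omega
  simp [hn0] at him
  linarith [him]

lemma aux_not_mem_real {x : ℝ} (hx : 0 < x) (w : ℂ) : (((x:ℂ), w) : ℂ × ℂ) ∉ domD := by
  rintro ⟨r, φ, h1, h2, h3, h4, h5, -⟩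
  have hr : (0:ℝ) < r := by linarith
  have habs : x = r := by
    have := congrArg (‖·‖) h5
    simpa [Complex.norm_exp, abs_of_pos hx, abs_of_pos hr] using this
  have hexp : Complex.exp ((φ:ℂ) * Complex.I) = 1 := by
    apply mul_left_cancel₀ (Complex.ofReal_ne_zero.2 hr.ne')
    rw [mul_one, ← h5, habs]
  obtain ⟨n, hn⟩ := Complex.exp_eq_one_iff.1 hexp
  have him : φ = n * (2 * Real.pi) := by
    have := congrArg Complex.im hn
    simpa using this
  have hpi := Real.pi_pos
  have hn1 : (0 : ℝ) < n := by nlinarith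
  have hn2 : (n : ℝ) < 1 := by nlinarith
  have hn1' : (0:ℤ) < n := by exact_mod_cast hn1
  have hn2' : (n:ℤ) < 1 := by exact_mod_cast hn2
  omega

lemma aux_sphere_not_mem {r φ : ℝ} {w : ℂ} (h1 : 1/2 < r) (h3 : 0 < φ)
    (h4 : φ < Real.pi / 2) (hw : 1 ≤ ‖w‖) :
    (((r : ℂ) * Complex.exp (φ * Complex.I), w) : ℂ × ℂ) ∉ domD := by
  rintro ⟨r', φ', g1, g2, g3, g4, g5, g6, -, -⟩
  have hpi := Real.pi_pos
  have hφφ : φ = φ' := aux_unique (by linarith) (by linarith) h3 (by linarith) g3 g4 g5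
  exact absurd (g6 (by rw [← hφφ]; linarith)) (not_lt.2 hw)

lemma aux_closure_sphere {r φ : ℝ} {w : ℂ} (h1 : 1/2 < r) (h2 : r < 1) (h3 : 0 < φ)
    (h4 : φ < Real.pi / 2) (hw : ‖w‖ ≤ 1) :
    (((r : ℂ) * Complex.exp (φ * Complex.I), w) : ℂ × ℂ) ∈ closure domD := by
  set c : ℂ := (r : ℂ) * Complex.exp (φ * Complex.I) with hc
  have hsub : ({c} ×ˢ Metric.ball (0:ℂ) 1) ⊆ domD := by
    rintro ⟨p1, p2⟩ ⟨hp1, hp2⟩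
    simp only [mem_singleton_iff] at hp1
    subst hp1
    exact aux_mem_domD h1 h2 h3 h4
      (by exact mem_ball_zero_iff.1 hp2)
  have hcl : closure ({c} ×ˢ Metric.ball (0:ℂ) 1) = {c} ×ˢ Metric.closedBall 0 1 := by
    rw [closure_prod_eq, closure_singleton, closure_ball _ one_ne_zero]
  have hmem : ((c, w) : ℂ × ℂ) ∈ {c} ×ˢ Metric.closedBall (0:ℂ) 1 :=
    ⟨rfl, by rw [Metric.mem_closedBall, dist_zero_right]; exact hw⟩
  exact closure_mono hsub (hcl ▸ hmem)

lemma aux_tendsto (x : ℝ) (w : ℂ) :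
    Filter.Tendsto (fun n : ℕ => (((x:ℂ) * Complex.exp (((1/(n+1) : ℝ):ℂ) * Complex.I), w) : ℂ × ℂ))
      Filter.atTop (nhds ((x:ℂ), w)) := by
  have h0 : Filter.Tendsto (fun n : ℕ => (1/(n+1) : ℝ)) Filter.atTop (nhds 0) :=
    tendsto_one_div_add_atTop_nhds_zero_nat
  have hc : Continuous fun t : ℝ => (((x:ℂ) * Complex.exp ((t:ℂ) * Complex.I), w) : ℂ × ℂ) := by
    continuity
  have heq : (((x:ℂ) * Complex.exp (((0:ℝ):ℂ) * Complex.I), w) : ℂ × ℂ) = ((x:ℂ), w) := by simp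
  exact heq ▸ ((hc.tendsto 0).comp h0)

lemma aux_one_div_lt (n : ℕ) : (0:ℝ) < 1/(n+1) ∧ (1:ℝ)/(n+1) < Real.pi / 2 := by
  have hpi := Real.pi_gt_three
  have h1 : (1:ℝ)/(n+1) ≤ 1 := by
    rw [div_le_one (by positivity)]
    have : (0:ℝ) ≤ n := Nat.cast_nonneg n
    linarith
  exact ⟨by positivity, by linarith⟩

theorem stmt12 (f : ℂ × ℂ → ℂ) (hf : f ∈ Acl domD) :
    sSup ((fun p => ‖f p‖) '' frontier domD) =
      sSup ((fun p => ‖f p‖) '' (frontier domD \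
        {p : ℂ × ℂ | (∃ x : ℝ, 1 / 2 < x ∧ x < 1 ∧ p.1 = (x : ℂ)) ∧ ‖p.2‖ < 1})) := by
  obtain ⟨hfc, hfd⟩ := hf
  set T : Set (ℂ × ℂ) :=
    {p : ℂ × ℂ | (∃ x : ℝ, 1 / 2 < x ∧ x < 1 ∧ p.1 = (x : ℂ)) ∧ ‖p.2‖ < 1} with hT
  have hpi := Real.pi_pos
  have hpi3 := Real.pi_gt_three
  -- boundedness
  have hbdd : Bornology.IsBounded domD := by
    apply (Metric.isBounded_closedBall (x := (0 : ℂ × ℂ)) (r := 3)).subset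
    rintro p ⟨r, φ, h1, h2, h3, h4, h5, h6, h7, h8⟩
    have hr : (0:ℝ) < r := by linarith
    have hp1 : ‖p.1‖ ≤ 3 := by
      rw [h5]
      simp [Complex.norm_exp, abs_of_pos hr]
      linarith
    have hp2 : ‖p.2‖ ≤ 3 := by
      rcases le_or_gt φ (Real.pi/2) with h | h
      · linarith [h6 h]
      · rcases lt_or_ge φ (3*Real.pi/2) with h' | h'
        · linarith [h7 h h']
        · linarith [(h8 h').2]
    rw [Metric.mem_closedBall, dist_zero_right, Prod.norm_def]
    exact max_le hp1 hp2

  have hKcpt : IsCompact (frontier domD) :=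
    Metric.isCompact_of_isClosed_isBounded isClosed_frontier
      (hbdd.closure.subset frontier_subset_closure)
  have hgc : ContinuousOn (fun p => ‖f p‖) (frontier domD) :=
    continuous_norm.comp_continuousOn (hfc.mono frontier_subset_closure)
  have hAcpt : IsCompact ((fun p => ‖f p‖) '' frontier domD) :=
    hKcpt.image_of_continuousOn hgc
  have hAbdd : BddAbove ((fun p => ‖f p‖) '' frontier domD) := hAcpt.bddAbove
  have hBsub : (fun p => ‖f p‖) '' (frontier domD \ T) ⊆
      (fun p => ‖f p‖) '' frontier domD := image_mono diff_subset
  have hBbdd : BddAbove ((fun p => ‖f p‖) '' (frontier domD \ T)) :=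
    hAbdd.mono hBsub
  -- a witness point in `frontier domD \ T`
  have hc0F : (((↑(3/4:ℝ) : ℂ) * Complex.exp ((Real.pi/4 : ℝ) * Complex.I), (1:ℂ)) : ℂ × ℂ) ∈
      frontier domD \ T := by
    constructor
    · rw [← closure_diff_interior]
      refine ⟨aux_closure_sphere (by norm_num) (by norm_num) (by linarith) (by linarith)
        (by simp), fun h => ?_⟩
      exact aux_sphere_not_mem (by norm_num) (by linarith) (by linarith) (by simp)
        (interior_subset h)
    · intro h
      exact absurd h.2 (by simp)
  have hBne : ((fun p => ‖f p‖) '' (frontier domD \ T)).Nonempty :=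
    ⟨_, ⟨_, hc0F, rfl⟩⟩
  have hAne : ((fun p => ‖f p‖) '' frontier domD).Nonempty :=
    ⟨_, ⟨_, hc0F.1, rfl⟩⟩
  set M := sSup ((fun p => ‖f p‖) '' (frontier domD \ T)) with hM
  -- Key bound on the slice
  have key : ∀ p ∈ frontier domD, p ∈ T → ‖f p‖ ≤ M := by
    rintro p hpF ⟨⟨x, hx1, hx2, hx3⟩, hpw⟩
    have step1 : ∀ φ : ℝ, 0 < φ → φ < Real.pi/2 →
        ‖f ((x:ℂ) * Complex.exp ((φ:ℂ) * Complex.I), p.2)‖ ≤ M := by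
      intro φ hφ1 hφ2
      set c : ℂ := (x:ℂ) * Complex.exp ((φ:ℂ) * Complex.I) with hcdef
      have hmapD : ∀ z ∈ Metric.ball (0:ℂ) 1, ((c, z) : ℂ × ℂ) ∈ domD := fun z hz =>
        aux_mem_domD hx1 hx2 hφ1 hφ2
          (by exact mem_ball_zero_iff.1 hz)
      have hdc : DiffContOnCl ℂ (fun z => f (c, z)) (Metric.ball (0:ℂ) 1) := by
        constructor
        · exact hfd.comp ((differentiableOn_const c).prodMk differentiableOn_id)
            (fun z hz => hmapD z hz)
        · rw [closure_ball _ one_ne_zero]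
          refine hfc.comp (Continuous.continuousOn (by continuity)) (fun z hz => ?_)
          exact aux_closure_sphere hx1 hx2 hφ1 hφ2
            (by exact mem_closedBall_zero_iff.1 hz)
      have hfr : ∀ z ∈ frontier (Metric.ball (0:ℂ) 1), ‖f (c, z)‖ ≤ M := by
        intro z hz
        rw [frontier_ball _ one_ne_zero] at hz
        have hz1 : ‖z‖ = 1 := by
          exact mem_sphere_zero_iff_norm.1 hz
        have hmem : ((c, z) : ℂ × ℂ) ∈ frontier domD \ T := by
          constructor
          · rw [← closure_diff_interior]
            exact ⟨aux_closure_sphere hx1 hx2 hφ1 hφ2 hz1.le,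
              fun h => aux_sphere_not_mem hx1 hφ1 hφ2 hz1.ge (interior_subset h)⟩
          · intro h
            rw [hT] at h
            exact absurd h.2 (by simp [hz1])
        calc ‖f (c, z)‖ = ‖f (c, z)‖ := rfl
          _ ≤ M := le_csSup hBbdd ⟨_, hmem, rfl⟩
      have hp2ball : p.2 ∈ closure (Metric.ball (0:ℂ) 1) :=
        subset_closure (mem_ball_zero_iff.2 (by exact hpw))
      have := Complex.norm_le_of_forall_mem_frontier_norm_le Metric.isBounded_ball hdc hfr hp2ball
      simpa using this
    -- limit argument
    have hpcl : p ∈ closure domD := frontier_subset_closure hpF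
    have hpeq : p = ((x:ℂ), p.2) := Prod.ext hx3 rfl
    have htq : Filter.Tendsto
        (fun n : ℕ => (((x:ℂ) * Complex.exp (((1/(n+1) : ℝ):ℂ) * Complex.I), p.2) : ℂ × ℂ))
        Filter.atTop (nhds p) := by
      rw [hpeq]; exact aux_tendsto x p.2
    have hqmem : ∀ n : ℕ,
        (((x:ℂ) * Complex.exp (((1/(n+1) : ℝ):ℂ) * Complex.I), p.2) : ℂ × ℂ) ∈ closure domD := by
      intro n
      obtain ⟨hn1, hn2⟩ := aux_one_div_lt n
      exact subset_closure (aux_mem_domD hx1 hx2 hn1 hn2 hpw)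
    have htq' : Filter.Tendsto
        (fun n : ℕ => (((x:ℂ) * Complex.exp (((1/(n+1) : ℝ):ℂ) * Complex.I), p.2) : ℂ × ℂ))
        Filter.atTop (nhdsWithin p (closure domD)) :=
      tendsto_nhdsWithin_iff.2 ⟨htq, Filter.Eventually.of_forall hqmem⟩
    have hfw : Filter.Tendsto
        (fun n : ℕ => ‖f ((x:ℂ) * Complex.exp (((1/(n+1) : ℝ):ℂ) * Complex.I), p.2)‖)
        Filter.atTop (nhds (‖f p‖)) :=
      (continuous_norm.tendsto _).comp ((hfc p hpcl).tendsto.comp htq')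
    refine le_of_tendsto hfw (Filter.Eventually.of_forall fun n => ?_)
    obtain ⟨hn1, hn2⟩ := aux_one_div_lt n
    exact step1 _ hn1 hn2
  refine le_antisymm (csSup_le hAne ?_) (csSup_le_csSup hAbdd hBne hBsub)
  rintro a ⟨p, hpF, rfl⟩
  by_cases hpT : p ∈ T
  · exact key p hpF hpT
  · exact le_csSup hBbdd ⟨p, ⟨hpF, hpT⟩, rfl⟩
end
end

section
/- Every point of M₁ := {re^{iφ} : r ∈ {1/2, 1}, π/2 ≤ φ ≤ 2π} × 3𝕋 is a peak point for O(cl D): for every (a, b) ∈ M₁ there exists a function f holomorphic on an open neighborhood of cl D such that f(a, b) = 1 and |f(z, w)| < 1 for all (z, w) ∈ cl D \ {(a, b)}. -/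
open Set Complex

noncomputable section

lemma aux_le (u : ℂ) (hu : ‖u‖ ≤ 1) : ‖(1 + u)/2‖ ≤ 1 := by
  rw [norm_div, Complex.norm_two, div_le_one (by norm_num)]
  calc ‖1 + u‖ ≤ ‖(1:ℂ)‖ + ‖u‖ := norm_add_le _ _
    _ ≤ 2 := by simp; linarith

lemma aux_lt (u : ℂ) (hu : ‖u‖ ≤ 1) (hne : u ≠ 1) :
    ‖(1 + u)/2‖ < 1 := by
  rw [norm_div, Complex.norm_two, div_lt_one (by norm_num)]
  have hsq : ‖u‖ ^ 2 = u.re ^ 2 + u.im ^ 2 := by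
    rw [Complex.sq_norm, Complex.normSq_apply]; ring
  have h2 : u.re ^ 2 + u.im ^ 2 ≤ 1 := by nlinarith [norm_nonneg u]
  have hre : u.re < 1 := by
    by_contra h
    push_neg at h
    have h3 : u.re ≤ ‖u‖ := Complex.re_le_norm u
    have h4 : u.re = 1 := le_antisymm (h3.trans hu) h
    have h5 : u.im = 0 := by nlinarith
    exact hne (Complex.ext (by simp [h4]) (by simp [h5]))
  have h6 : ‖1 + u‖ ^ 2 = (1 + u.re) ^ 2 + u.im ^ 2 := by
    rw [Complex.sq_norm, Complex.normSq_apply]; simp; ring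
  nlinarith [norm_nonneg (1 + u)]

lemma clos_bound : closure domD ⊆
    {p : ℂ × ℂ | 1/2 ≤ ‖p.1‖ ∧ ‖p.1‖ ≤ 1 ∧ ‖p.2‖ ≤ 3} := by
  apply closure_minimal
  · intro p hp
    obtain ⟨r, φ, hr1, hr2, hφ1, hφ2, hz, h1, h2, h3⟩ := hp
    have habs : ‖p.1‖ = r := by
      rw [hz, norm_mul, Complex.norm_exp_ofReal_mul_I, mul_one,
        Complex.norm_of_nonneg (by linarith)]
    refine ⟨by rw [habs]; linarith, by rw [habs]; linarith, ?_⟩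
    rcases le_or_gt φ (Real.pi / 2) with h | h
    · linarith [h1 h]
    rcases lt_or_ge φ (3 * Real.pi / 2) with h' | h'
    · linarith [h2 h h']
    · linarith [(h3 h').2]
  · refine IsClosed.inter ?_ (IsClosed.inter ?_ ?_)
    · exact isClosed_le continuous_const (continuous_norm.comp continuous_fst)
    · exact isClosed_le (continuous_norm.comp continuous_fst) continuous_const
    · exact isClosed_le (continuous_norm.comp continuous_snd) continuous_const

lemma main_aux (a b : ℂ) (hb : ‖b‖ = 3) (g : ℂ → ℂ)
    (hgdiff : DifferentiableOn ℂ g {z : ℂ | z ≠ 0})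
    (hga : g a = 1)
    (hgle : ∀ z : ℂ, 1/2 ≤ ‖z‖ → ‖z‖ ≤ 1 → ‖g z‖ ≤ 1)
    (hginj : ∀ z : ℂ, z ≠ 0 → g z = 1 → z = a) :
    ∃ (f : ℂ × ℂ → ℂ) (U : Set (ℂ × ℂ)), IsOpen U ∧ closure domD ⊆ U ∧
      DifferentiableOn ℂ f U ∧ f (a, b) = 1 ∧
      ∀ p ∈ closure domD, p ≠ (a, b) → ‖f p‖ < 1 := by
  have hb0 : b ≠ 0 := by
    intro h; rw [h] at hb; simp at hb
  have hcb0 : (starRingEnd ℂ) b ≠ 0 := by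
    simpa using hb0
  have hcb : (starRingEnd ℂ) b * b = 9 := by
    rw [mul_comm, Complex.mul_conj, Complex.normSq_eq_norm_sq, hb]
    norm_num
  have hfe : ∀ p : ℂ × ℂ,
      ((2:ℂ)⁻¹ + 2⁻¹ * g p.1) * (2⁻¹ + ((starRingEnd ℂ) b / 18) * p.2)
        = ((1 + g p.1)/2) * ((1 + (starRingEnd ℂ) b * p.2 / 9)/2) := fun p => by ring
  refine ⟨fun p => ((2:ℂ)⁻¹ + 2⁻¹ * g p.1) * (2⁻¹ + ((starRingEnd ℂ) b / 18) * p.2),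
    {p : ℂ × ℂ | p.1 ≠ 0}, ?_, ?_, ?_, ?_, ?_⟩
  · exact isOpen_ne.preimage continuous_fst
  · intro p hp
    have h1 := (clos_bound hp).1
    intro h0
    rw [h0] at h1
    simp at h1
    linarith
  · exact DifferentiableOn.mul
      ((differentiableOn_const _).add ((differentiableOn_const _).mul
        (hgdiff.comp differentiable_fst.differentiableOn (fun p hp => hp))))
      ((differentiableOn_const _).add ((differentiableOn_const _).mul
        differentiable_snd.differentiableOn))
  · show ((2:ℂ)⁻¹ + 2⁻¹ * g a) * (2⁻¹ + ((starRingEnd ℂ) b / 18) * b) = 1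
    rw [hga, div_mul_eq_mul_div, hcb]
    norm_num
  · intro p hp hne
    have hbd := clos_bound hp
    have hp0 : p.1 ≠ 0 := by
      intro h0
      have h1 := hbd.1
      rw [h0] at h1; simp at h1; linarith
    have hu : ‖g p.1‖ ≤ 1 := hgle _ hbd.1 hbd.2.1
    have hv : ‖(starRingEnd ℂ) b * p.2 / 9‖ ≤ 1 := by
      rw [norm_div, norm_mul, Complex.norm_conj, hb]
      have : ‖(9 : ℂ)‖ = 9 := by norm_num [Complex.norm_ofNat]
      rw [this, div_le_one (by norm_num)]
      linarith [hbd.2.2]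
    simp only []
    rw [hfe p, norm_mul]
    rcases eq_or_ne p.1 a with h1 | h1
    · have h2 : p.2 ≠ b := by
        intro h2
        exact hne (Prod.ext h1 h2)
      have hvne : (starRingEnd ℂ) b * p.2 / 9 ≠ 1 := by
        intro h
        apply h2
        have h3 : (starRingEnd ℂ) b * p.2 = 9 := by
          field_simp at h; linear_combination h
        exact mul_left_cancel₀ hcb0 (h3.trans hcb.symm)
      have hA := aux_le (g p.1) hu
      have hB := aux_lt _ hv hvne
      nlinarith [norm_nonneg ((1 + g p.1)/2),
        norm_nonneg ((1 + (starRingEnd ℂ) b * p.2 / 9)/2)]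
    · have hune : g p.1 ≠ 1 := fun h => h1 (hginj _ hp0 h)
      have hA := aux_lt _ hu hune
      have hB := aux_le _ hv
      nlinarith [norm_nonneg ((1 + g p.1)/2),
        norm_nonneg ((1 + (starRingEnd ℂ) b * p.2 / 9)/2)]

theorem stmt15 (a b : ℂ)
    (ha : ∃ r φ : ℝ, (r = 1 / 2 ∨ r = 1) ∧ Real.pi / 2 ≤ φ ∧ φ ≤ 2 * Real.pi ∧
      a = (r : ℂ) * Complex.exp (φ * Complex.I))
    (hb : ‖b‖ = 3) :
    ∃ (f : ℂ × ℂ → ℂ) (U : Set (ℂ × ℂ)), IsOpen U ∧ closure domD ⊆ U ∧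
      DifferentiableOn ℂ f U ∧ f (a, b) = 1 ∧
      ∀ p ∈ closure domD, p ≠ (a, b) → ‖f p‖ < 1 := by
  obtain ⟨r, φ, hr, _, _, haeq⟩ := ha
  have habs : ‖a‖ = r := by
    rw [haeq, norm_mul, Complex.norm_exp_ofReal_mul_I, mul_one,
      Complex.norm_of_nonneg (by rcases hr with h | h <;> rw [h] <;> norm_num)]
  rcases hr with h | h
  · -- r = 1/2 : use g z = a / z
    have ha2 : ‖a‖ = 1/2 := by rw [habs, h]
    have ha0 : a ≠ 0 := by
      intro h0; rw [h0] at ha2; simp at ha2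
    apply main_aux a b hb (fun z => a / z)
    · exact (differentiableOn_const a).div differentiable_id.differentiableOn
        (fun z hz => hz)
    · exact div_self ha0
    · intro z h1 h2
      rw [norm_div, ha2, div_le_one (by linarith)]
      linarith
    · intro z hz hgz
      exact ((div_eq_one_iff_eq hz).mp hgz).symm
  · -- r = 1 : use g z = conj a * z
    have ha1 : ‖a‖ = 1 := by rw [habs, h]
    have hca : (starRingEnd ℂ) a * a = 1 := by
      rw [mul_comm, Complex.mul_conj, Complex.normSq_eq_norm_sq, ha1]
      norm_num
    have hca0 : (starRingEnd ℂ) a ≠ 0 := by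
      intro h0
      rw [h0, zero_mul] at hca
      exact zero_ne_one hca
    apply main_aux a b hb (fun z => (starRingEnd ℂ) a * z)
    · exact (differentiableOn_const _).mul differentiable_id.differentiableOn
    · exact hca
    · intro z h1 h2
      rw [norm_mul, Complex.norm_conj, ha1, one_mul]
      exact h2
    · intro z _ hgz
      exact mul_left_cancel₀ hca0 (hgz.trans hca.symm)
end
end

section
/- For every a ∈ I₀ = (1/2, 1) there exists a function f holomorphic on an open neighborhood of cl D such that f(a, w) = 1 for all w with 2 ≤ |w| ≤ 3, and |f(z, w)| < 1 for all (z, w) ∈ cl D \ ({a} × cl A(2,3)). -/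
open Set Complex

noncomputable section

namespace Stmt16Aux

def auxC : ℂ := Complex.exp ((-(5 * Real.pi / 4) : ℝ) * I)

def auxG (ζ₀ ζ : ℂ) : ℂ := Complex.exp (-(I * (ζ - ζ₀) + (ζ - ζ₀) ^ 2 / 7))

lemma diff_auxG (ζ₀ : ℂ) : Differentiable ℂ (auxG ζ₀) := by
  unfold auxG; fun_prop

lemma abs_auxG (ζ₀ ζ : ℂ) :
    ‖auxG ζ₀ ζ‖ =
      Real.exp ((ζ - ζ₀).im + (ζ - ζ₀).im ^ 2 / 7 - (ζ - ζ₀).re ^ 2 / 7) := by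
  rw [auxG, Complex.norm_exp]
  congr 1
  set η := ζ - ζ₀ with hη
  simp [pow_two, Complex.mul_re, Complex.mul_im, Complex.div_re, Complex.normSq]
  ring

lemma exp_lt (x y : ℝ) (h1 : -(2 * Real.pi) ≤ y) (h2 : y ≤ 0) (h3 : y < 0 ∨ x ≠ 0) :
    Real.exp (y + y ^ 2 / 7 - x ^ 2 / 7) < 1 := by
  rw [Real.exp_lt_one_iff]
  have hπ : Real.pi < 3.15 := Real.pi_lt_d2
  rcases h3 with h | h
  · nlinarith [sq_nonneg x]
  · have hx : 0 < x ^ 2 := by positivity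
    nlinarith

lemma lem_log (r φ : ℝ) (hr : 0 < r) (h1 : -Real.pi < φ) (h2 : φ ≤ Real.pi) :
    Complex.log ((r : ℂ) * Complex.exp (φ * I)) = (Real.log r : ℂ) + φ * I := by
  have h : ((r : ℂ) * Complex.exp (φ * I)) = Complex.exp ((Real.log r : ℂ) + φ * I) := by
    rw [Complex.exp_add, ← Complex.ofReal_exp, Real.exp_log hr]
  rw [h, Complex.log_exp (by simpa using h1) (by simpa using h2)]

lemma lem_log2 (r φ : ℝ) (hr : 0 < r) (h1 : Real.pi / 4 < φ) (h2 : φ ≤ 9 * Real.pi / 4) :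
    Complex.log ((r : ℂ) * Complex.exp (φ * I) * auxC) + ((5 * Real.pi / 4 : ℝ) : ℂ) * I
      = (Real.log r : ℂ) + φ * I := by
  have h : (r : ℂ) * Complex.exp (φ * I) * auxC
      = (r : ℂ) * Complex.exp ((φ - 5 * Real.pi / 4 : ℝ) * I) := by
    rw [auxC, mul_assoc, ← Complex.exp_add]
    congr 1
    push_cast
    ring
  rw [h, lem_log r _ hr (by linarith [Real.pi_pos]) (by linarith [Real.pi_pos])]
  push_cast
  ring

lemma lem_agree (z : ℂ) (him : 0 < z.im) (hlt : z.re < z.im) :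
    Complex.log (z * auxC) + ((5 * Real.pi / 4 : ℝ) : ℂ) * I = Complex.log z := by
  have hz : z ≠ 0 := fun h => by simp [h] at him
  have habs : 0 < ‖z‖ := norm_pos_iff.mpr hz
  have hθ0 : 0 ≤ arg z := Complex.arg_nonneg_iff.2 him.le
  have hθπ : arg z ≤ Real.pi := Complex.arg_le_pi z
  have hθ : Real.pi / 4 < arg z := by
    by_contra hc
    push_neg at hc
    have hcos : Real.cos (arg z) = z.re / ‖z‖ := Complex.cos_arg hz
    have hsin : Real.sin (arg z) = z.im / ‖z‖ := Complex.sin_arg z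
    have hlt' : Real.cos (arg z) < Real.sin (arg z) := by
      rw [hcos, hsin]; exact (div_lt_div_iff_of_pos_right habs).2 hlt
    have hge : 0 ≤ Real.cos (arg z) - Real.sin (arg z) := by
      have hmem : arg z + Real.pi / 4 ∈ Icc (-(Real.pi / 2)) (Real.pi / 2) :=
        ⟨by linarith [Real.pi_pos], by linarith⟩
      have h0 := Real.cos_nonneg_of_mem_Icc hmem
      rw [Real.cos_add, Real.cos_pi_div_four, Real.sin_pi_div_four] at h0
      have h2 : (0:ℝ) < Real.sqrt 2 / 2 := by positivity
      nlinarith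
    linarith
  have h : z * auxC = Complex.exp (Complex.log z + ((-(5 * Real.pi / 4) : ℝ) : ℂ) * I) := by
    rw [Complex.exp_add, Complex.exp_log hz, auxC]
  rw [h, Complex.log_exp ?_ ?_]
  · push_cast; ring
  · simp only [Complex.add_im, Complex.log_im, Complex.mul_im, Complex.ofReal_re,
      Complex.I_im, Complex.ofReal_im, Complex.I_re, mul_zero, mul_one, zero_mul]
    linarith
  · simp only [Complex.add_im, Complex.log_im, Complex.mul_im, Complex.ofReal_re,
      Complex.I_im, Complex.ofReal_im, Complex.I_re, mul_zero, mul_one, zero_mul]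
    linarith

lemma auxC_re : auxC.re = -(Real.sqrt 2 / 2) := by
  rw [auxC]
  rw [show ((-(5 * Real.pi / 4) : ℝ) : ℂ) * I = ((-(5 * Real.pi / 4) : ℝ) : ℂ) * I from rfl]
  rw [Complex.exp_ofReal_mul_I_re]
  rw [Real.cos_neg, show 5 * Real.pi / 4 = Real.pi / 4 + Real.pi by ring, Real.cos_add,
    Real.cos_pi, Real.sin_pi, Real.cos_pi_div_four]
  ring

lemma auxC_im : auxC.im = Real.sqrt 2 / 2 := by
  rw [auxC, Complex.exp_ofReal_mul_I_im]
  rw [Real.sin_neg, show 5 * Real.pi / 4 = Real.pi / 4 + Real.pi by ring, Real.sin_add,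
    Real.cos_pi, Real.sin_pi, Real.sin_pi_div_four]
  ring

lemma slit1 (z : ℂ) (h : 0 < z.re + z.im) : z ∈ Complex.slitPlane := by
  rw [Complex.mem_slitPlane_iff]
  by_cases h0 : z.im = 0
  · left; rw [h0] at h; simpa using h
  · right; exact h0

lemma slit2 (z : ℂ) (h : z.re ≠ z.im ∨ z.re < 0) : z * auxC ∈ Complex.slitPlane := by
  rw [Complex.mem_slitPlane_iff]
  have h2 : (0:ℝ) < Real.sqrt 2 / 2 := by positivity
  by_cases he : z.re = z.im
  · left
    have hneg : z.re < 0 := by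
      rcases h with h | h
      · exact absurd he h
      · exact h
    rw [Complex.mul_re, auxC_re, auxC_im, ← he]
    nlinarith
  · right
    rw [Complex.mul_im, auxC_re, auxC_im]
    intro hc
    apply he
    have h3 : Real.sqrt 2 / 2 * (z.re - z.im) = 0 := by linear_combination hc
    rcases mul_eq_zero.1 h3 with h4 | h4
    · exact absurd h4 (ne_of_gt h2)
    · linarith

end Stmt16Aux

set_option maxHeartbeats 1000000 in
open Stmt16Aux in
theorem stmt16 (a : ℝ) (ha : a ∈ Ioo (1 / 2 : ℝ) 1) :
    ∃ (f : ℂ × ℂ → ℂ) (U : Set (ℂ × ℂ)), IsOpen U ∧ closure domD ⊆ U ∧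
      DifferentiableOn ℂ f U ∧
      (∀ w : ℂ, 2 ≤ ‖w‖ → ‖w‖ ≤ 3 → f ((a : ℂ), w) = 1) ∧
      (∀ p ∈ closure domD, ¬(p.1 = (a : ℂ) ∧ 2 ≤ ‖p.2‖ ∧ ‖p.2‖ ≤ 3) →
        ‖f p‖ < 1) := by
  obtain ⟨ha1, ha2⟩ := ha
  have ha0 : 0 < a := by linarith
  have hπ : 0 < Real.pi := Real.pi_pos
  classical
  set ζ₀ : ℂ := (Real.log a : ℂ) + ((2 * Real.pi : ℝ) : ℂ) * I with hζ₀
  set F : ℂ × ℂ → ℂ := fun p =>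
    if ‖p.2‖ < 3 / 2 ∧ 0 < p.1.re + p.1.im
    then auxG ζ₀ (Complex.log p.1)
    else auxG ζ₀ (Complex.log (p.1 * auxC) + ((5 * Real.pi / 4 : ℝ) : ℂ) * I)
    with hF
  -- the three open pieces
  set U1 : Set (ℂ × ℂ) := {p | ‖p.2‖ < 3 / 2 ∧ 0 < p.1.re + p.1.im} with hU1d
  set U2 : Set (ℂ × ℂ) := {p | p.1.re < |p.1.im|} with hU2d
  set U3 : Set (ℂ × ℂ) :=
    {p | (p.1.re ≠ p.1.im ∨ p.1.re < 0) ∧ 3 / 2 < ‖p.2‖} with hU3d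
  have hU1open : IsOpen U1 := by
    have : U1 = {p : ℂ × ℂ | ‖p.2‖ < 3 / 2} ∩ {p | 0 < p.1.re + p.1.im} := rfl
    rw [this]
    exact (isOpen_lt (continuous_norm.comp continuous_snd) continuous_const).inter
      (isOpen_lt continuous_const
        ((Complex.continuous_re.comp continuous_fst).add
          (Complex.continuous_im.comp continuous_fst)))
  have hU2open : IsOpen U2 :=
    isOpen_lt (Complex.continuous_re.comp continuous_fst)
      (_root_.continuous_abs.comp (Complex.continuous_im.comp continuous_fst))
  have hU3open : IsOpen U3 := by
    have : U3 = (((fun p : ℂ × ℂ => p.1.re - p.1.im) ⁻¹' ({(0:ℝ)}ᶜ)) ∪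
        {p : ℂ × ℂ | p.1.re < 0}) ∩ {p : ℂ × ℂ | 3 / 2 < ‖p.2‖} := by
      ext p
      simp only [hU3d, mem_setOf_eq, mem_inter_iff, mem_union, mem_preimage, mem_compl_iff,
        mem_singleton_iff, sub_ne_zero]
    rw [this]
    exact (((isOpen_compl_singleton.preimage
        ((Complex.continuous_re.comp continuous_fst).sub
          (Complex.continuous_im.comp continuous_fst))).union
        (isOpen_lt (Complex.continuous_re.comp continuous_fst) continuous_const)).inter
      (isOpen_lt continuous_const (continuous_norm.comp continuous_snd)))
  -- coordinates of r e^{iφ}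
  have hre : ∀ r φ : ℝ, ((r : ℂ) * Complex.exp ((φ : ℂ) * I)).re = r * Real.cos φ := by
    intro r φ
    rw [Complex.mul_re, Complex.exp_ofReal_mul_I_re, Complex.exp_ofReal_mul_I_im]
    simp
  have him : ∀ r φ : ℝ, ((r : ℂ) * Complex.exp ((φ : ℂ) * I)).im = r * Real.sin φ := by
    intro r φ
    rw [Complex.mul_im, Complex.exp_ofReal_mul_I_re, Complex.exp_ofReal_mul_I_im]
    simp
  -- the compact set V containing closure of domD
  set m : ℝ × ℝ × ℂ → ℂ × ℂ := fun q => ((q.1 : ℂ) * Complex.exp ((q.2.1 : ℂ) * I), q.2.2)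
    with hm
  have hmc : Continuous m := by
    apply Continuous.prodMk
    · exact (Complex.continuous_ofReal.comp continuous_fst).mul
        (Complex.continuous_exp.comp
          ((Complex.continuous_ofReal.comp (continuous_fst.comp continuous_snd)).mul
            continuous_const))
    · exact continuous_snd.comp continuous_snd
  set B : Set (ℝ × ℝ × ℂ) :=
    (Icc (1/2 : ℝ) 1 ×ˢ (Icc (0 : ℝ) (Real.pi / 2) ×ˢ Metric.closedBall (0 : ℂ) 1)) ∪
    (Icc (1/2 : ℝ) 1 ×ˢ (Icc (Real.pi / 2) (3 * Real.pi / 2) ×ˢ Metric.closedBall (0 : ℂ) 3)) ∪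
    (Icc (1/2 : ℝ) 1 ×ˢ (Icc (3 * Real.pi / 2) (2 * Real.pi) ×ˢ
      (Metric.closedBall (0 : ℂ) 3 \ Metric.ball (0 : ℂ) 2))) with hB
  have hBcomp : IsCompact B :=
    ((isCompact_Icc.prod (isCompact_Icc.prod (isCompact_closedBall _ _))).union
      (isCompact_Icc.prod (isCompact_Icc.prod (isCompact_closedBall _ _)))).union
      (isCompact_Icc.prod (isCompact_Icc.prod
        ((isCompact_closedBall _ _).diff Metric.isOpen_ball)))
  have hVclosed : IsClosed (m '' B) := (hBcomp.image hmc).isClosed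
  have hsub : domD ⊆ m '' B := by
    rintro p ⟨r, φ, hr1, hr2, hφ0, hφ2, hz, h6, h7, h8⟩
    refine ⟨(r, φ, p.2), ?_, ?_⟩
    · rcases le_or_gt φ (Real.pi / 2) with h | h
      · exact Or.inl (Or.inl ⟨⟨hr1.le, hr2.le⟩, ⟨hφ0.le, h⟩, by
          simpa using (h6 h).le⟩)
      · rcases lt_or_ge φ (3 * Real.pi / 2) with h' | h'
        · exact Or.inl (Or.inr ⟨⟨hr1.le, hr2.le⟩, ⟨h.le, h'.le⟩, by
            simpa using (h7 h h').le⟩)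
        · refine Or.inr ⟨⟨hr1.le, hr2.le⟩, ⟨h', hφ2.le⟩, ?_, ?_⟩
          · simpa using (h8 h').2.le
          · simpa using not_lt.2 (h8 h').1.le
    · exact Prod.ext hz.symm rfl
  have hclo : closure domD ⊆ m '' B := closure_minimal hsub hVclosed
  -- branch identities
  have hbr1 : EqOn F (fun p : ℂ × ℂ => auxG ζ₀ (Complex.log p.1)) U1 := by
    intro p hp
    exact if_pos hp
  have hbr2 : EqOn F (fun p : ℂ × ℂ =>
      auxG ζ₀ (Complex.log (p.1 * auxC) + ((5 * Real.pi / 4 : ℝ) : ℂ) * I)) (U2 ∪ U3) := by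
    intro p hp
    show (if ‖p.2‖ < 3 / 2 ∧ 0 < p.1.re + p.1.im
        then auxG ζ₀ (Complex.log p.1)
        else auxG ζ₀ (Complex.log (p.1 * auxC) + ((5 * Real.pi / 4 : ℝ) : ℂ) * I))
      = auxG ζ₀ (Complex.log (p.1 * auxC) + ((5 * Real.pi / 4 : ℝ) : ℂ) * I)
    split_ifs with h
    · rcases hp with hp | hp
      · have hp' : p.1.re < |p.1.im| := hp
        have him0 : 0 < p.1.im := by
          by_contra hcon
          push_neg at hcon
          rw [abs_of_nonpos hcon] at hp'
          linarith [h.2]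
        have hlt : p.1.re < p.1.im := by rwa [abs_of_pos him0] at hp'
        rw [lem_agree p.1 him0 hlt]
      · exact absurd h.1 (not_lt.2 hp.2.le)
    · rfl
  refine ⟨F, U1 ∪ (U2 ∪ U3), hU1open.union (hU2open.union hU3open), ?_, ?_, ?_, ?_⟩
  · -- closure domD ⊆ U
    refine hclo.trans ?_
    rintro p ⟨⟨r, φ, w⟩, hq, rfl⟩
    have hq' : (r, φ, w) ∈ B := hq
    rcases hq' with (⟨hr, hφ, hw⟩ | ⟨hr, hφ, hw⟩) | ⟨hr, hφ, hw⟩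
      <;> [replace hφ : 0 ≤ φ ∧ φ ≤ Real.pi / 2 := hφ;
           replace hφ : Real.pi / 2 ≤ φ ∧ φ ≤ 3 * Real.pi / 2 := hφ;
           replace hφ : 3 * Real.pi / 2 ≤ φ ∧ φ ≤ 2 * Real.pi := hφ]
      <;> replace hr : 1 / 2 ≤ r ∧ r ≤ 1 := hr
    · -- piece 1 : in U1
      left
      constructor
      · simp only [hm]
        have : ‖w‖ ≤ 1 := by simpa using hw
        linarith
      · simp only [hm, hre, him]
        have hc : 0 ≤ Real.cos φ := Real.cos_nonneg_of_mem_Icc ⟨by linarith [hφ.1], hφ.2⟩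
        have hs : 0 ≤ Real.sin φ := Real.sin_nonneg_of_nonneg_of_le_pi hφ.1 (by linarith [hφ.2])
        have hcs := Real.sin_sq_add_cos_sq φ
        have h1 : 1 ≤ Real.cos φ + Real.sin φ := by nlinarith [mul_nonneg hc hs]
        nlinarith [hr.1]
    · -- piece 2 : in U2
      right; left
      simp only [hU2d, mem_setOf_eq, hm, hre, him]
      have hc : Real.cos φ ≤ 0 :=
        Real.cos_nonpos_of_pi_div_two_le_of_le hφ.1 (by linarith [hφ.2])
      have hcs := Real.sin_sq_add_cos_sq φ
      by_contra hcon
      push_neg at hcon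
      have h1 : r * Real.cos φ ≤ 0 := by nlinarith [hr.1, hr.2]
      have h2 : (0:ℝ) ≤ |r * Real.sin φ| := abs_nonneg _
      have h3 : |r * Real.sin φ| = 0 := le_antisymm (le_trans hcon h1) h2
      have h4 : r * Real.sin φ = 0 := abs_eq_zero.1 h3
      have h5 : Real.sin φ = 0 := by
        rcases mul_eq_zero.1 h4 with h | h
        · linarith [hr.1]
        · exact h
      have h6 : r * Real.cos φ = 0 := le_antisymm h1 (by rw [h3] at hcon; exact hcon)
      have h7 : Real.cos φ = 0 := by
        rcases mul_eq_zero.1 h6 with h | h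
        · linarith [hr.1]
        · exact h
      rw [h5, h7] at hcs
      norm_num at hcs
    · -- piece 3 : in U3
      right; right
      constructor
      · left
        simp only [hm, hre, him]
        have hc : 0 ≤ Real.cos φ := by
          rw [← Real.cos_sub_two_pi]
          exact Real.cos_nonneg_of_mem_Icc ⟨by linarith [hφ.1], by linarith [hφ.2]⟩
        have hs : Real.sin φ ≤ 0 := by
          rw [← Real.sin_sub_two_pi]
          exact Real.sin_nonpos_of_nonpos_of_neg_pi_le (by linarith [hφ.2])
            (by linarith [hφ.1])
        have hcs := Real.sin_sq_add_cos_sq φ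
        intro hcon
        have h1 : Real.cos φ = Real.sin φ := by
          have := mul_left_cancel₀ (show (r:ℝ) ≠ 0 by nlinarith [hr.1]) hcon
          exact this
        nlinarith
      · simp only [hm]
        have : 2 ≤ ‖w‖ := by
          have := hw.2
          simpa using this
        linarith
  · -- DifferentiableOn
    intro p hp
    apply DifferentiableAt.differentiableWithinAt
    rcases hp with hp | hp
    · have hd : DifferentiableAt ℂ (fun q : ℂ × ℂ => auxG ζ₀ (Complex.log q.1)) p :=
        DifferentiableAt.comp (𝕜 := ℂ) (g := auxG ζ₀)
          (f := fun q : ℂ × ℂ => Complex.log q.1) p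
          ((diff_auxG ζ₀).differentiableAt)
          (differentiableAt_fst.clog (slit1 _ hp.2))
      exact hd.congr_of_eventuallyEq
        (Filter.eventuallyEq_of_mem (hU1open.mem_nhds hp) hbr1)
    · have hh : p.1.re ≠ p.1.im ∨ p.1.re < 0 := by
        rcases hp with hp | hp
        · have hp' : p.1.re < |p.1.im| := hp
          by_cases he : p.1.re = p.1.im
          · right
            rw [← he] at hp'
            by_contra hcon
            push_neg at hcon
            rw [_root_.abs_of_nonneg hcon] at hp'
            exact lt_irrefl _ hp'
          · left; exact he
        · exact hp.1
      have hd : DifferentiableAt ℂ (fun q : ℂ × ℂ =>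
          auxG ζ₀ (Complex.log (q.1 * auxC) + ((5 * Real.pi / 4 : ℝ) : ℂ) * I)) p :=
        DifferentiableAt.comp (𝕜 := ℂ) (g := auxG ζ₀)
          (f := fun q : ℂ × ℂ => Complex.log (q.1 * auxC) + ((5 * Real.pi / 4 : ℝ) : ℂ) * I) p
          ((diff_auxG ζ₀).differentiableAt)
          (((differentiableAt_fst.mul_const auxC).clog (slit2 _ hh)).add_const _)
      exact hd.congr_of_eventuallyEq
        (Filter.eventuallyEq_of_mem ((hU2open.union hU3open).mem_nhds hp) hbr2)
  · -- value 1 on {a} × annulus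
    intro w h2 h3
    have hcond : ¬(‖w‖ < 3 / 2 ∧ 0 < ((a : ℂ)).re + ((a : ℂ)).im) := by
      rintro ⟨h, -⟩
      linarith
    have hFeq : F ((a : ℂ), w)
        = (if ‖w‖ < 3 / 2 ∧ 0 < ((a : ℂ)).re + ((a : ℂ)).im
          then auxG ζ₀ (Complex.log (a : ℂ))
          else auxG ζ₀ (Complex.log ((a : ℂ) * auxC) + ((5 * Real.pi / 4 : ℝ) : ℂ) * I)) := rfl
    rw [hFeq, if_neg hcond]
    have hrw : (a : ℂ) = (a : ℂ) * Complex.exp (((2 * Real.pi : ℝ) : ℂ) * I) := by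
      rw [show (((2 * Real.pi : ℝ) : ℂ) * I) = 2 * (Real.pi : ℂ) * I by push_cast; ring,
        Complex.exp_two_pi_mul_I, mul_one]
    rw [hrw, lem_log2 a (2 * Real.pi) ha0 (by linarith) (by linarith)]
    rw [hζ₀]
    simp [auxG]
  · -- strict inequality off the exceptional set
    intro p hp hnot
    obtain ⟨⟨r, φ, w⟩, hq, rfl⟩ := hclo hp
    have hq' : (r, φ, w) ∈ B := hq
    have hsimre : ∀ s t : ℝ,
        (((Real.log s : ℂ) + (t : ℂ) * I - ζ₀).re) = Real.log s - Real.log a := by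
      intro s t; simp [hζ₀]
    have hsimim : ∀ s t : ℝ,
        (((Real.log s : ℂ) + (t : ℂ) * I - ζ₀).im) = t - 2 * Real.pi := by
      intro s t; simp [hζ₀]
    have hgoal : ‖F ((r : ℂ) * Complex.exp ((φ : ℂ) * I), w)‖ < 1 → 
        ‖F (m (r, φ, w))‖ < 1 := fun h => h
    show ‖F (m (r, φ, w))‖ < 1
    apply hgoal
    have hnot' : ¬((r : ℂ) * Complex.exp ((φ : ℂ) * I) = (a : ℂ) ∧
        2 ≤ ‖w‖ ∧ ‖w‖ ≤ 3) := fun h => hnot h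
    have hFeq : F ((r : ℂ) * Complex.exp ((φ : ℂ) * I), w)
        = (if ‖w‖ < 3 / 2 ∧
              0 < ((r : ℂ) * Complex.exp ((φ : ℂ) * I)).re
                  + ((r : ℂ) * Complex.exp ((φ : ℂ) * I)).im
          then auxG ζ₀ (Complex.log ((r : ℂ) * Complex.exp ((φ : ℂ) * I)))
          else auxG ζ₀ (Complex.log ((r : ℂ) * Complex.exp ((φ : ℂ) * I) * auxC)
            + ((5 * Real.pi / 4 : ℝ) : ℂ) * I)) := rfl
    rw [hFeq]
    rcases hq' with (⟨hr, hφ, hw⟩ | ⟨hr, hφ, hw⟩) | ⟨hr, hφ, hw⟩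
      <;> [replace hφ : 0 ≤ φ ∧ φ ≤ Real.pi / 2 := hφ;
           replace hφ : Real.pi / 2 ≤ φ ∧ φ ≤ 3 * Real.pi / 2 := hφ;
           replace hφ : 3 * Real.pi / 2 ≤ φ ∧ φ ≤ 2 * Real.pi := hφ]
      <;> replace hr : 1 / 2 ≤ r ∧ r ≤ 1 := hr
    · -- piece 1
      have hr0 : (0:ℝ) < r := by linarith [hr.1]
      have hw1 : ‖w‖ ≤ 1 := by simpa using hw
      have hpos : 0 < ((r : ℂ) * Complex.exp ((φ : ℂ) * I)).re
          + ((r : ℂ) * Complex.exp ((φ : ℂ) * I)).im := by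
        rw [hre, him]
        have hc : 0 ≤ Real.cos φ := Real.cos_nonneg_of_mem_Icc ⟨by linarith [hφ.1], hφ.2⟩
        have hs : 0 ≤ Real.sin φ :=
          Real.sin_nonneg_of_nonneg_of_le_pi hφ.1 (by linarith [hφ.2])
        have hcs := Real.sin_sq_add_cos_sq φ
        have h1 : 1 ≤ Real.cos φ + Real.sin φ := by nlinarith [mul_nonneg hc hs]
        nlinarith [hr.1]
      rw [if_pos ⟨by linarith, hpos⟩, lem_log r φ hr0 (by linarith [hφ.1]) (by linarith [hφ.2]),
        abs_auxG, hsimre, hsimim]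
      exact exp_lt _ _ (by linarith [hφ.1]) (by linarith [hφ.2]) (Or.inl (by linarith [hφ.2]))
    · -- piece 2
      have hr0 : (0:ℝ) < r := by linarith [hr.1]
      by_cases hcond : ‖w‖ < 3 / 2 ∧
          0 < ((r : ℂ) * Complex.exp ((φ : ℂ) * I)).re
              + ((r : ℂ) * Complex.exp ((φ : ℂ) * I)).im
      · rw [if_pos hcond]
        have hpos := hcond.2
        rw [hre, him] at hpos
        have hφπ : φ ≤ Real.pi := by
          by_contra hcon
          push_neg at hcon
          have h1 : 0 < Real.sin (φ - Real.pi) :=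
            Real.sin_pos_of_pos_of_lt_pi (by linarith) (by linarith [hφ.2])
          have h2 : Real.sin (φ - Real.pi + Real.pi) = -Real.sin (φ - Real.pi) :=
            Real.sin_add_pi _
          rw [sub_add_cancel] at h2
          have hc : Real.cos φ ≤ 0 :=
            Real.cos_nonpos_of_pi_div_two_le_of_le hφ.1 (by linarith [hφ.2])
          have hsneg : Real.sin φ < 0 := by rw [h2]; linarith
          have hx1 : r * Real.sin φ < 0 := mul_neg_of_pos_of_neg hr0 hsneg
          have hx2 : r * Real.cos φ ≤ 0 := mul_nonpos_iff.2 (Or.inl ⟨hr0.le, hc⟩)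
          linarith
        rw [lem_log r φ hr0 (by linarith [hφ.1]) hφπ, abs_auxG, hsimre, hsimim]
        exact exp_lt _ _ (by linarith [hφ.1]) (by linarith) (Or.inl (by linarith))
      · rw [if_neg hcond]
        rw [lem_log2 r φ hr0 (by linarith [hφ.1]) (by linarith [hφ.2]), abs_auxG,
          hsimre, hsimim]
        exact exp_lt _ _ (by linarith [hφ.1]) (by linarith [hφ.2]) (Or.inl (by linarith [hφ.2]))
    · -- piece 3
      have hr0 : (0:ℝ) < r := by linarith [hr.1]
      have hw3 : ‖w‖ ≤ 3 := by simpa using hw.1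
      have hw2 : 2 ≤ ‖w‖ := by
        have := hw.2
        simp only [Metric.mem_ball, dist_zero_right, not_lt] at this
        exact this
      rw [if_neg (by rintro ⟨hc1, -⟩; linarith)]
      rw [lem_log2 r φ hr0 (by linarith [hφ.1]) (by linarith [hφ.2]), abs_auxG,
        hsimre, hsimim]
      apply exp_lt _ _ (by linarith [hφ.1]) (by linarith [hφ.2])
      have hkey : ¬(r = a ∧ φ = 2 * Real.pi) := by
        rintro ⟨rfl, rfl⟩
        apply hnot'
        refine ⟨?_, hw2, hw3⟩
        rw [show (((2 * Real.pi : ℝ) : ℂ) * I) = 2 * (Real.pi : ℂ) * I by push_cast; ring,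
          Complex.exp_two_pi_mul_I, mul_one]
      by_cases hφ2 : φ = 2 * Real.pi
      · right
        intro hx
        apply hkey
        refine ⟨?_, hφ2⟩
        have hlog : Real.log r = Real.log a := by linarith [hx]
        rw [← Real.exp_log hr0, ← Real.exp_log ha0, hlog]
      · left
        have := lt_of_le_of_ne hφ.2 hφ2
        linarith
end
end

section
/- For every a = re^{iφ} with r ∈ {1/2, 1} and 0 < φ < π/2, and every compact set K ⊆ cl D that is norming for O(cl D), one has K ∩ ({a} × cl 𝔻) ≠ ∅. -/
open Set Complex

noncomputable section

/-! ### Auxiliary lemmas -/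

lemma closure_sub_annulus : closure domD ⊆
    {p : ℂ × ℂ | 1 / 2 ≤ ‖p.1‖ ∧ ‖p.1‖ ≤ 1} := by
  apply closure_minimal
  · rintro ⟨z, w⟩ ⟨r, φ, h1, h2, _, _, h5, _, _, _⟩
    have h5' : z = (r : ℂ) * Complex.exp (φ * Complex.I) := h5
    have : ‖z‖ = r := by
      rw [h5', norm_mul, Complex.norm_exp_ofReal_mul_I, mul_one, Complex.norm_real, Real.norm_eq_abs,
        abs_of_pos (by linarith)]
    constructor <;> simp only [mem_setOf_eq] <;> rw [this] <;> linarith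
  · have : {p : ℂ × ℂ | 1 / 2 ≤ ‖p.1‖ ∧ ‖p.1‖ ≤ 1} =
        (fun p : ℂ × ℂ => ‖p.1‖) ⁻¹' Icc (1/2) 1 := rfl
    rw [this]
    exact isClosed_Icc.preimage (continuous_norm.comp continuous_fst)

lemma closure_sub_fiber : closure domD ⊆
    {p : ℂ × ℂ | (0 < p.1.re ∧ 0 < p.1.im) → ‖p.2‖ ≤ 1} := by
  apply closure_minimal
  · rintro ⟨z, w⟩ ⟨r, φ, h1, h2, h3, h4, h5, h6, _, _⟩ ⟨hre, him⟩
    simp only [mem_setOf_eq] at *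
    have hzre : z.re = r * Real.cos φ := by
      rw [h5]; simp [Complex.exp_mul_I, Complex.cos_ofReal_re, Complex.sin_ofReal_re]
    have hzim : z.im = r * Real.sin φ := by
      rw [h5]; simp [Complex.exp_mul_I, Complex.cos_ofReal_re, Complex.sin_ofReal_re]
    have hrpos : (0:ℝ) < r := by linarith
    have hsin : 0 < Real.sin φ := by nlinarith [hzim ▸ him]
    have hcos : 0 < Real.cos φ := by nlinarith [hzre ▸ hre]
    have hφπ : φ < Real.pi := by
      by_contra h
      push_neg at h
      have : Real.sin (φ - 2 * Real.pi) ≤ 0 :=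
        Real.sin_nonpos_of_nonpos_of_neg_pi_le (by linarith) (by linarith)
      rw [Real.sin_sub_two_pi] at this
      linarith
    have hφ2 : φ ≤ Real.pi / 2 := by
      by_contra h
      push_neg at h
      have : Real.cos φ ≤ 0 :=
        Real.cos_nonpos_of_pi_div_two_le_of_le h.le (by linarith)
      linarith
    exact (h6 hφ2).le
  · have : {p : ℂ × ℂ | (0 < p.1.re ∧ 0 < p.1.im) → ‖p.2‖ ≤ 1} =
        {p : ℂ × ℂ | 0 < p.1.re ∧ 0 < p.1.im}ᶜ ∪ {p : ℂ × ℂ | ‖p.2‖ ≤ 1} := by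
      ext p; simp [imp_iff_not_or]
    rw [this]
    refine IsClosed.union ?_ ?_
    · rw [isClosed_compl_iff]
      exact (isOpen_lt continuous_const (Complex.continuous_re.comp continuous_fst)).inter
        (isOpen_lt continuous_const (Complex.continuous_im.comp continuous_fst))
    · exact isClosed_le (continuous_norm.comp continuous_snd) continuous_const

lemma mem_closure_domD (r φ : ℝ) (hr : r = 1 / 2 ∨ r = 1) (hφ₁ : 0 < φ)
    (hφ₂ : φ < Real.pi / 2) :
    (((r : ℂ) * Complex.exp (φ * Complex.I), (0 : ℂ)) : ℂ × ℂ) ∈ closure domD := by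
  have hπ := Real.pi_pos
  have hmem : ∀ t ∈ Ioo (1/2 : ℝ) 1,
      (fun t : ℝ => (((t : ℂ) * Complex.exp (φ * Complex.I), (0 : ℂ)) : ℂ × ℂ)) t ∈ domD := by
    intro t ht
    refine ⟨t, φ, ht.1, ht.2, hφ₁, by linarith, rfl, fun _ => by simp, fun _ _ => by simp,
      fun h => absurd h (by push_neg; linarith)⟩
  have hcont : Continuous
      (fun t : ℝ => (((t : ℂ) * Complex.exp (φ * Complex.I), (0 : ℂ)) : ℂ × ℂ)) := by
    fun_prop
  have hrc : r ∈ closure (Ioo (1/2 : ℝ) 1) := by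
    rw [closure_Ioo (by norm_num)]
    rcases hr with rfl | rfl <;> norm_num
  have h1 : (((r : ℂ) * Complex.exp (φ * Complex.I), (0 : ℂ)) : ℂ × ℂ) ∈
      (fun t : ℝ => (((t : ℂ) * Complex.exp (φ * Complex.I), (0 : ℂ)) : ℂ × ℂ)) ''
        closure (Ioo (1/2 : ℝ) 1) := ⟨r, hrc, rfl⟩
  have h2 := image_closure_subset_closure_image (s := Ioo (1/2 : ℝ) 1) hcont h1
  exact closure_mono (by rintro x ⟨t, ht, rfl⟩; exact hmem t ht) h2

lemma aux_abs (u : ℂ) (hu : ‖u‖ ≤ 1) (hne : u ≠ 1) : ‖1 + u‖ < 2 := by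
  have hsq : Complex.normSq (1 + u) = 1 + 2 * u.re + Complex.normSq u := by
    simp [Complex.normSq_apply]; ring
  have h1 : Complex.normSq u ≤ 1 := by
    have h := Complex.sq_norm u
    nlinarith [norm_nonneg u]
  have hre : u.re ≤ 1 := (Complex.re_le_norm u).trans hu
  have hlt : Complex.normSq (1 + u) < 4 := by
    rcases lt_or_eq_of_le hre with h | h
    · nlinarith
    · exfalso
      have him : u.im = 0 := by
        have := Complex.normSq_apply u; nlinarith
      exact hne (Complex.ext h him)
  have habs : ‖1 + u‖ ^ 2 < 2 ^ 2 := by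
    rw [Complex.sq_norm]; norm_num [hlt]
  exact lt_of_pow_lt_pow_left₀ 2 (by norm_num) habs

lemma master (K : Set (ℂ × ℂ)) (hKc : IsCompact K) (hKsub : K ⊆ closure domD)
    (hKn : IsNorming domD K (Ocl domD)) (a : ℂ) (ha : ((a, 0) : ℂ × ℂ) ∈ closure domD)
    (u : ℂ → ℂ)
    (hOcl : (fun p : ℂ × ℂ => (1 + u p.1) / 2) ∈ Ocl domD)
    (hu1 : ∀ p ∈ closure domD, ‖u p.1‖ ≤ 1)
    (hua : u a = 1)
    (huK : ∀ p ∈ K, u p.1 ≠ 1) : False := by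
  set f : ℂ × ℂ → ℂ := fun p => (1 + u p.1) / 2 with hf
  have habsf : ∀ p : ℂ × ℂ, ‖f p‖ = ‖1 + u p.1‖ / 2 := by
    intro p; rw [hf]; simp [norm_div]
  have hsup := hKn f hOcl
  have hub : ∀ p ∈ closure domD, ‖f p‖ ≤ 1 := by
    intro p hp
    rw [habsf]
    have h1 := norm_add_le (1:ℂ) (u p.1)
    simp only [norm_one] at h1
    have h2 := hu1 p hp
    linarith
  have hbdd : 1 ∈ upperBounds ((fun p => ‖f p‖) '' closure domD) := by
    rintro x ⟨p, hp, rfl⟩; exact hub p hp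
  have hRHS : sSup ((fun p => ‖f p‖) '' closure domD) = 1 := by
    refine le_antisymm (Real.sSup_le ?_ one_pos.le) (le_csSup ⟨1, hbdd⟩ ?_)
    · rintro x ⟨p, hp, rfl⟩; exact hub p hp
    · refine ⟨(a, 0), ha, ?_⟩
      show ‖f (a, 0)‖ = 1
      rw [habsf]
      simp [hua]
      norm_num
  have hLHS : sSup ((fun p => ‖f p‖) '' K) < 1 := by
    rcases K.eq_empty_or_nonempty with rfl | hne
    · simp [Real.sSup_empty]
    · obtain ⟨U, hUo, hUs, hUd⟩ := hOcl
      have hcont : ContinuousOn (fun p => ‖f p‖) K :=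
        (continuous_norm.comp_continuousOn
          ((hUd.continuousOn).mono (hKsub.trans hUs)))
      obtain ⟨p₀, hp₀, hmax⟩ := hKc.exists_isMaxOn hne hcont
      have hlt : ‖f p₀‖ < 1 := by
        rw [habsf]
        have := aux_abs (u p₀.1) (hu1 p₀ (hKsub hp₀)) (huK p₀ hp₀)
        linarith
      refine lt_of_le_of_lt (Real.sSup_le ?_ (norm_nonneg _)) hlt
      rintro x ⟨p, hp, rfl⟩; exact hmax hp
  rw [hsup, hRHS] at hLHS
  exact lt_irrefl 1 hLHS

theorem stmt19 (r φ : ℝ) (hr : r = 1 / 2 ∨ r = 1) (hφ₁ : 0 < φ) (hφ₂ : φ < Real.pi / 2)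
    (K : Set (ℂ × ℂ)) (hKc : IsCompact K) (hKsub : K ⊆ closure domD)
    (hKn : IsNorming domD K (Ocl domD)) :
    (K ∩ {p : ℂ × ℂ | p.1 = (r : ℂ) * Complex.exp (φ * Complex.I) ∧
      ‖p.2‖ ≤ 1}).Nonempty := by
  have hπ := Real.pi_pos
  by_contra hcon
  set a : ℂ := (r : ℂ) * Complex.exp (φ * Complex.I) with ha_def
  have hK' : ∀ p ∈ K, ¬(p.1 = a ∧ ‖p.2‖ ≤ 1) := fun p hp h => hcon ⟨p, hp, h⟩
  have hrpos : (0:ℝ) < r := by rcases hr with rfl | rfl <;> norm_num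
  have habs_a : ‖a‖ = r := by
    rw [ha_def, norm_mul, Complex.norm_exp_ofReal_mul_I, mul_one, Complex.norm_real, Real.norm_eq_abs,
      abs_of_pos hrpos]
  have hane : a ≠ 0 := by
    intro h
    rw [h, norm_zero] at habs_a
    linarith
  have hare : a.re = r * Real.cos φ := by
    rw [ha_def]; simp [Complex.exp_mul_I, Complex.cos_ofReal_re, Complex.sin_ofReal_re]
  have haim : a.im = r * Real.sin φ := by
    rw [ha_def]; simp [Complex.exp_mul_I, Complex.cos_ofReal_re, Complex.sin_ofReal_re]
  have hcos : 0 < Real.cos φ := Real.cos_pos_of_mem_Ioo ⟨by linarith, hφ₂⟩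
  have hsin : 0 < Real.sin φ := Real.sin_pos_of_pos_of_lt_pi hφ₁ (by linarith)
  have hquad : 0 < a.re ∧ 0 < a.im := by
    rw [hare, haim]
    exact ⟨mul_pos hrpos hcos, mul_pos hrpos hsin⟩
  have hKa : ∀ p ∈ K, p.1 ≠ a := by
    intro p hp h
    exact hK' p hp ⟨h, closure_sub_fiber (hKsub hp) (h ▸ hquad)⟩
  have hamem : ((a, 0) : ℂ × ℂ) ∈ closure domD := by
    rw [ha_def]; exact mem_closure_domD r φ hr hφ₁ hφ₂
  rcases hr with hr | hr
  · -- r = 1/2 : use u z = a / z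
    refine master K hKc hKsub hKn a hamem (fun z => a / z) ?_ ?_ (div_self hane) ?_
    · refine ⟨{p : ℂ × ℂ | p.1 ≠ 0}, ?_, ?_, ?_⟩
      · exact isOpen_ne.preimage continuous_fst
      · intro p hp
        have h1 := (closure_sub_annulus hp).1
        intro h0
        rw [h0, norm_zero] at h1
        norm_num at h1
      · simp only [div_eq_mul_inv]
        intro p hp
        have h1 : DifferentiableAt ℂ (fun q : ℂ × ℂ => (q.1)⁻¹) p :=
          differentiableAt_fst.inv hp
        exact (((h1.const_mul a).const_add 1).mul_const _).differentiableWithinAt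
    · intro p hp
      have h1 := (closure_sub_annulus hp).1
      rw [norm_div, habs_a, hr, div_le_one (by linarith)]
      linarith
    · intro p hp h
      have hz : p.1 ≠ 0 := by
        have h1 := (closure_sub_annulus (hKsub hp)).1
        intro h0
        rw [h0, norm_zero] at h1
        norm_num at h1
      exact hKa p hp ((div_eq_one_iff_eq hz).mp h).symm
  · -- r = 1 : use u z = conj a * z
    have hconjmul : (starRingEnd ℂ) a * a = 1 := by
      rw [mul_comm, Complex.mul_conj, Complex.normSq_eq_norm_sq, habs_a, hr]
      norm_num
    refine master K hKc hKsub hKn a hamem (fun z => (starRingEnd ℂ) a * z) ?_ ?_ hconjmul ?_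
    · refine ⟨univ, isOpen_univ, subset_univ _, ?_⟩
      refine Differentiable.differentiableOn ?_
      simp only [div_eq_mul_inv]
      exact ((differentiable_fst.const_mul _).const_add 1).mul_const _
    · intro p hp
      have h1 := (closure_sub_annulus hp).2
      rw [norm_mul, Complex.norm_conj, habs_a, hr, one_mul]
      exact h1
    · intro p hp h
      have hca : (starRingEnd ℂ) a ≠ 0 := by
        simpa using hane
      have h' : (starRingEnd ℂ) a * p.1 = 1 := h
      have : (starRingEnd ℂ) a * p.1 = (starRingEnd ℂ) a * a := by rw [h', hconjmul]
      exact hKa p hp (mul_left_cancel₀ hca this)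
end
end
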